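/- arXiv:1106.4135 — 8 statements merged into one kernel-verified Lean document; each statement's English description precedes it below -/
import Mathlib

section
/- For a Hausdorff topological space X, the following are equivalent: (1) X has a development at non-isolated points; (2) there exists a g-function g for X such that for every non-isolated point x ∈ X^d and all sequences {x_n}, {y_n} in X, if {x, x_n} ⊆ g(n, y_n) for every n ∈ ℕ, then the sequence x_n converges to x; (3) X is quasi-developable and the subspace X^d is perfect. -/
open Set Topology Filter Function

/-- `st(x, 𝒰) = ⋃ {P ∈ 𝒰 : x ∈ P}`. -/
def stpt {X : Type*} (x : X) (𝒰 : Set (Set X)) : Set X := ⋃₀ {P ∈ 𝒰 | x ∈ P}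

/-- The set `X^d` of non-isolated points of `X`. -/
def nonIsolatedPoints (X : Type*) [TopologicalSpace X] : Set X :=
  {x : X | ¬IsOpen ({x} : Set X)}

/-- A development at non-isolated points: a sequence of open covers of `X` such that
the stars at each non-isolated point form a neighborhood base there. -/
def IsDevelopmentAtNonIsolatedPoints {X : Type*} [TopologicalSpace X]
    (𝒰 : ℕ → Set (Set X)) : Prop :=
  (∀ n, ∀ P ∈ 𝒰 n, IsOpen P) ∧ (∀ n, ⋃₀ 𝒰 n = Set.univ) ∧
    ∀ x ∈ nonIsolatedPoints X, ∀ U : Set X, x ∈ U → IsOpen U →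
      ∃ n, stpt x (𝒰 n) ⊆ U

/-- A quasi-development for `X`. -/
def IsQuasiDevelopment {X : Type*} [TopologicalSpace X] (𝒰 : ℕ → Set (Set X)) : Prop :=
  (∀ n, ∀ P ∈ 𝒰 n, IsOpen P) ∧
    ∀ (x : X) (U : Set X), x ∈ U → IsOpen U →
      ∃ n, x ∈ stpt x (𝒰 n) ∧ stpt x (𝒰 n) ⊆ U

/-- A `g`-function for `X`. -/
def IsGFunction {X : Type*} [TopologicalSpace X] (g : ℕ → X → Set X) : Prop :=
  (∀ n x, IsOpen (g n x)) ∧ (∀ n x, x ∈ g n x) ∧ ∀ n x, g (n + 1) x ⊆ g n x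

lemma isClosed_nonIsolatedPoints (X : Type*) [TopologicalSpace X] :
    IsClosed (nonIsolatedPoints X) := by
  rw [← isOpen_compl_iff]
  rw [isOpen_iff_forall_mem_open]
  intro x hx
  simp only [nonIsolatedPoints, mem_compl_iff, mem_setOf_eq, not_not] at hx
  refine ⟨{x}, ?_, hx, rfl⟩
  intro y hy
  simp only [mem_singleton_iff] at hy
  subst hy
  simp [nonIsolatedPoints, hx]

lemma isGδ_exists_seq {X : Type*} [TopologicalSpace X] {s : Set X} (h : IsGδ s) :
    ∃ f : ℕ → Set X, (∀ n, IsOpen (f n)) ∧ s = ⋂ n, f n := by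
  obtain ⟨T, hTo, hTc, rfl⟩ := h
  rcases T.eq_empty_or_nonempty with rfl | hne
  · exact ⟨fun _ => univ, fun _ => isOpen_univ, by simp⟩
  · obtain ⟨f, rfl⟩ := hTc.exists_eq_range hne
    exact ⟨f, fun n => hTo _ ⟨n, rfl⟩, by rw [sInter_range]⟩

lemma stpt_subset_sUnion {X : Type*} (x : X) (𝒰 : Set (Set X)) : stpt x 𝒰 ⊆ ⋃₀ 𝒰 :=
  sUnion_subset_sUnion (sep_subset _ _)

lemma one_to_two {X : Type*} [TopologicalSpace X]
    (h : ∃ 𝒰 : ℕ → Set (Set X), IsDevelopmentAtNonIsolatedPoints 𝒰) :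
    ∃ g : ℕ → X → Set X, IsGFunction g ∧
      ∀ x ∈ nonIsolatedPoints X, ∀ xs ys : ℕ → X,
        (∀ n, x ∈ g n (ys n) ∧ xs n ∈ g n (ys n)) →
          Filter.Tendsto xs Filter.atTop (nhds x) := by
  obtain ⟨𝒰, hop, hcov, hbase⟩ := h
  have hP : ∀ (k : ℕ) (x : X), ∃ P, P ∈ 𝒰 k ∧ x ∈ P := by
    intro k x
    have : x ∈ ⋃₀ 𝒰 k := by rw [hcov k]; trivial
    obtain ⟨P, hP, hxP⟩ := this
    exact ⟨P, hP, hxP⟩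
  choose P hPmem hPx using hP
  refine ⟨fun n x => ⋂ k ∈ Finset.range (n + 1), P k x, ⟨?_, ?_, ?_⟩, ?_⟩
  · intro n x
    exact isOpen_biInter_finset fun k _ => hop k _ (hPmem k x)
  · intro n x
    simp only [Set.mem_iInter]
    intro k _
    exact hPx k x
  · intro n x y hy
    simp only [Set.mem_iInter] at hy ⊢
    intro k hk
    exact hy k (Finset.mem_range.mpr (lt_of_lt_of_le (Finset.mem_range.mp hk) (by omega)))
  · intro x hx xs ys hseq
    rw [tendsto_nhds]
    intro U hUo hxU
    obtain ⟨m, hm⟩ := hbase x hx U hxU hUo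
    filter_upwards [eventually_ge_atTop m] with n hn
    obtain ⟨hx', hxs'⟩ := hseq n
    have hsub : (⋂ k ∈ Finset.range (n + 1), P k (ys n)) ⊆ P m (ys n) := by
      intro z hz
      simp only [Set.mem_iInter] at hz
      exact hz m (Finset.mem_range.mpr (by omega))
    exact hm ⟨P m (ys n), ⟨hPmem m (ys n), hsub hx'⟩, hsub hxs'⟩

lemma two_to_one {X : Type*} [TopologicalSpace X]
    (h : ∃ g : ℕ → X → Set X, IsGFunction g ∧
      ∀ x ∈ nonIsolatedPoints X, ∀ xs ys : ℕ → X,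
        (∀ n, x ∈ g n (ys n) ∧ xs n ∈ g n (ys n)) →
          Filter.Tendsto xs Filter.atTop (nhds x)) :
    ∃ 𝒰 : ℕ → Set (Set X), IsDevelopmentAtNonIsolatedPoints 𝒰 := by
  obtain ⟨g, ⟨hgo, hgx, _⟩, hprop⟩ := h
  refine ⟨fun n => Set.range (g n), ?_, ?_, ?_⟩
  · rintro n P ⟨y, rfl⟩
    exact hgo n y
  · intro n
    rw [eq_univ_iff_forall]
    intro x
    exact ⟨g n x, ⟨x, rfl⟩, hgx n x⟩
  · intro x hx U hxU hUo
    by_contra hc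
    push_neg at hc
    have h' : ∀ n, ∃ z y, (x ∈ g n y ∧ z ∈ g n y) ∧ z ∉ U := by
      intro n
      obtain ⟨z, hz, hzU⟩ := not_subset.mp (hc n)
      obtain ⟨Q, ⟨⟨y, rfl⟩, hxQ⟩, hzQ⟩ := hz
      exact ⟨z, y, ⟨hxQ, hzQ⟩, hzU⟩
    choose xs ys h1 h2 using h'
    have htend := hprop x hx xs ys fun n => (h1 n)
    obtain ⟨n, hn⟩ := (Filter.eventually_iff.mpr (tendsto_nhds.mp htend U hUo hxU) : ∀ᶠ n in atTop, xs n ∈ U).exists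
    exact h2 n hn

lemma one_to_three {X : Type*} [TopologicalSpace X]
    (h : ∃ 𝒰 : ℕ → Set (Set X), IsDevelopmentAtNonIsolatedPoints 𝒰) :
    (∃ 𝒰 : ℕ → Set (Set X), IsQuasiDevelopment 𝒰) ∧
      ∀ C : Set ↥(nonIsolatedPoints X), IsClosed C → IsGδ C := by
  obtain ⟨𝒰, hop, hcov, hbase⟩ := h
  constructor
  · refine ⟨fun n => Nat.casesOn n {S : Set X | ∃ z : X, S = {z} ∧ IsOpen S} 𝒰, ?_, ?_⟩
    · rintro (_ | n) P hP
      · obtain ⟨z, rfl, hz⟩ := hP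
        exact hz
      · exact hop n P hP
    · intro x U hxU hUo
      by_cases hx : x ∈ nonIsolatedPoints X
      · obtain ⟨n, hn⟩ := hbase x hx U hxU hUo
        have hxc : x ∈ ⋃₀ 𝒰 n := by rw [hcov n]; trivial
        obtain ⟨P, hP, hxP⟩ := hxc
        exact ⟨n + 1, ⟨P, ⟨hP, hxP⟩, hxP⟩, hn⟩
      · simp only [nonIsolatedPoints, mem_setOf_eq, not_not] at hx
        refine ⟨0, ⟨{x}, ⟨⟨x, rfl, hx⟩, rfl⟩, rfl⟩, ?_⟩
        rintro z ⟨P, ⟨⟨w, rfl, _⟩, hxw⟩, hzw⟩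
        simp only [mem_singleton_iff] at hxw hzw
        rw [hzw, ← hxw]
        exact hxU
  · intro C hC
    have hF : IsClosed (Subtype.val '' C) :=
      (Topology.IsClosedEmbedding.subtypeVal (isClosed_nonIsolatedPoints X)).isClosedMap C hC
    set F := Subtype.val '' C with hFdef
    have key : C = ⋂ n, Subtype.val ⁻¹' ⋃₀ {P ∈ 𝒰 n | (P ∩ F).Nonempty} := by
      ext p
      simp only [mem_iInter, mem_preimage]
      constructor
      · intro hp n
        have : (p : X) ∈ ⋃₀ 𝒰 n := by rw [hcov n]; trivial
        obtain ⟨P, hP, hpP⟩ := this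
        exact ⟨P, ⟨hP, ⟨p, hpP, ⟨p, hp, rfl⟩⟩⟩, hpP⟩
      · intro hp
        by_contra hpC
        have hpF : (p : X) ∈ Fᶜ := by
          intro hmem
          obtain ⟨c, hc, hcp⟩ := hmem
          exact hpC (by rwa [← Subtype.val_injective hcp])
        obtain ⟨n, hn⟩ := hbase (p : X) p.2 Fᶜ hpF hF.isOpen_compl
        obtain ⟨P, ⟨hP𝒰, ⟨z, hzP, hzF⟩⟩, hpP⟩ := hp n
        exact hn ⟨P, ⟨hP𝒰, hpP⟩, hzP⟩ hzF
    rw [key]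
    exact IsGδ.iInter_of_isOpen fun n =>
      (isOpen_sUnion fun P hP => hop n P hP.1).preimage continuous_subtype_val

lemma three_to_one {X : Type*} [TopologicalSpace X]
    (h : (∃ 𝒰 : ℕ → Set (Set X), IsQuasiDevelopment 𝒰) ∧
      ∀ C : Set ↥(nonIsolatedPoints X), IsClosed C → IsGδ C) :
    ∃ 𝒰 : ℕ → Set (Set X), IsDevelopmentAtNonIsolatedPoints 𝒰 := by
  obtain ⟨⟨𝒱, hVo, hVq⟩, hperf⟩ := h
  set d := nonIsolatedPoints X with hd_def
  have hd : IsClosed d := isClosed_nonIsolatedPoints X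
  -- S n : closed subset of the subspace d
  have hS : ∀ n : ℕ, ∃ O : ℕ → Set ↥d, (∀ m, IsOpen (O m)) ∧
      (Subtype.val ⁻¹' (⋃₀ 𝒱 n)ᶜ : Set ↥d) = ⋂ m, O m := by
    intro n
    refine isGδ_exists_seq (hperf _ ?_)
    exact ((isOpen_sUnion (hVo n)).isClosed_compl).preimage continuous_subtype_val
  choose O hOopen hOeq using hS
  set F : ℕ → ℕ → Set X := fun n m => Subtype.val '' (O n m)ᶜ with hFdef
  have hFc : ∀ n m, IsClosed (F n m) := fun n m =>
    (Topology.IsClosedEmbedding.subtypeVal hd).isClosedMap _ (hOopen n m).isClosed_compl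
  have key : ∀ n, d ∩ ⋃₀ 𝒱 n = ⋃ m, F n m := by
    intro n
    have h1 : (Subtype.val ⁻¹' (⋃₀ 𝒱 n) : Set ↥d) = ⋃ m, (O n m)ᶜ := by
      rw [← compl_iInter, ← hOeq n, preimage_compl, compl_compl]
    calc d ∩ ⋃₀ 𝒱 n = Subtype.val '' (Subtype.val ⁻¹' (⋃₀ 𝒱 n) : Set ↥d) := by
          rw [Subtype.image_preimage_val]
      _ = ⋃ m, F n m := by rw [h1, image_iUnion]
  refine ⟨fun k => 𝒱 (Nat.unpair k).1 ∪ {(F (Nat.unpair k).1 (Nat.unpair k).2)ᶜ}, ?_, ?_, ?_⟩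
  · rintro k P (hP | hP)
    · exact hVo _ P hP
    · rw [mem_singleton_iff] at hP
      rw [hP]
      exact (hFc _ _).isOpen_compl
  · intro k
    rw [eq_univ_iff_forall]
    intro x
    by_cases hx : x ∈ F (Nat.unpair k).1 (Nat.unpair k).2
    · have : x ∈ d ∩ ⋃₀ 𝒱 (Nat.unpair k).1 := by
        rw [key]
        exact mem_iUnion.mpr ⟨_, hx⟩
      obtain ⟨P, hP, hxP⟩ := this.2
      exact ⟨P, Or.inl hP, hxP⟩
    · exact ⟨_, Or.inr rfl, hx⟩
  · intro x hx U hxU hUo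
    obtain ⟨n, hxst, hst⟩ := hVq x U hxU hUo
    have hxd : x ∈ d ∩ ⋃₀ 𝒱 n := ⟨hx, stpt_subset_sUnion x (𝒱 n) hxst⟩
    rw [key] at hxd
    obtain ⟨m, hm⟩ := mem_iUnion.mp hxd
    refine ⟨Nat.pair n m, ?_⟩
    rintro z ⟨P, ⟨hPG, hxP⟩, hzP⟩
    simp only [Nat.unpair_pair] at hPG
    rcases hPG with hP | hP
    · exact hst ⟨P, ⟨hP, hxP⟩, hzP⟩
    · rw [mem_singleton_iff] at hP
      rw [hP] at hxP
      exact absurd hm hxP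

/-- Theorem 2.1: For a Hausdorff space `X`, TFAE:
(1) `X` has a development at non-isolated points;
(2) there is a `g`-function such that whenever `x ∈ X^d` and `{x, xₙ} ⊆ g(n, yₙ)`
for all `n`, the sequence `xₙ` converges to `x`;
(3) `X` is quasi-developable and the subspace `X^d` is perfect. -/
theorem theorem_2_1 {X : Type*} [TopologicalSpace X] [T2Space X] :
    List.TFAE
      [ ∃ 𝒰 : ℕ → Set (Set X), IsDevelopmentAtNonIsolatedPoints 𝒰,
        ∃ g : ℕ → X → Set X, IsGFunction g ∧
          ∀ x ∈ nonIsolatedPoints X, ∀ xs ys : ℕ → X,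
            (∀ n, x ∈ g n (ys n) ∧ xs n ∈ g n (ys n)) →
              Filter.Tendsto xs Filter.atTop (nhds x),
        (∃ 𝒰 : ℕ → Set (Set X), IsQuasiDevelopment 𝒰) ∧
          ∀ C : Set ↥(nonIsolatedPoints X), IsClosed C → IsGδ C ] := by
  tfae_have 1 → 2 := one_to_two
  tfae_have 2 → 1 := two_to_one
  tfae_have 1 → 3 := one_to_three
  tfae_have 3 → 1 := three_to_one
  tfae_finish
end

section
/- If a Hausdorff topological space X has a development at non-isolated points, then there exists a g-function g for X such that for every non-isolated point x ∈ X^d and all sequences {x_n}, {y_n} in X, if {x, x_n} ⊆ g(n, y_n) for every n ∈ ℕ, then the sequence x_n converges to x. -/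
open Set Topology Filter Function

/-- Theorem 2.1, (1) ⇒ (2). -/
theorem theorem_2_1_1_implies_2 {X : Type*} [TopologicalSpace X] [T2Space X]
    (h : ∃ 𝒰 : ℕ → Set (Set X), IsDevelopmentAtNonIsolatedPoints 𝒰) :
    ∃ g : ℕ → X → Set X, IsGFunction g ∧
      ∀ x ∈ nonIsolatedPoints X, ∀ xs ys : ℕ → X,
        (∀ n, x ∈ g n (ys n) ∧ xs n ∈ g n (ys n)) →
          Filter.Tendsto xs Filter.atTop (nhds x) := by
  obtain ⟨𝒰, hopen, hcov, hbase⟩ := h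
  have hP : ∀ (n : ℕ) (x : X), ∃ P, P ∈ 𝒰 n ∧ x ∈ P := by
    intro n x
    have : x ∈ ⋃₀ 𝒰 n := (hcov n).symm ▸ Set.mem_univ x
    obtain ⟨P, hPm, hx⟩ := this
    exact ⟨P, hPm, hx⟩
  choose P hPmem hPx using hP
  refine ⟨fun n x => ⋂ i ∈ Finset.range (n + 1), P i x, ⟨?_, ?_, ?_⟩, ?_⟩
  · intro n x
    exact isOpen_biInter_finset fun i _ => hopen i _ (hPmem i x)
  · intro n x
    exact Set.mem_biInter fun i _ => hPx i x
  · intro n x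
    intro y hy
    exact Set.mem_iInter₂.2 fun i hi => Set.mem_iInter₂.1 hy i
      (Finset.mem_range.2 (by have := Finset.mem_range.1 hi; omega))
  · intro x hx xs ys hmem
    rw [tendsto_atTop_nhds]
    intro U hxU hU
    obtain ⟨m, hm⟩ := hbase x hx U hxU hU
    refine ⟨m, fun n hn => ?_⟩
    have hsub : (⋂ i ∈ Finset.range (n + 1), P i (ys n)) ⊆ P m (ys n) :=
      fun y hy => Set.mem_iInter₂.1 hy m (Finset.mem_range.2 (by omega))
    have hxP : x ∈ P m (ys n) := hsub (hmem n).1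
    have hxsP : xs n ∈ P m (ys n) := hsub (hmem n).2
    exact hm ⟨P m (ys n), ⟨hPmem m (ys n), hxP⟩, hxsP⟩
end

section
/- Let X be a Hausdorff topological space admitting a g-function g such that for every non-isolated point x ∈ X^d and all sequences {x_n}, {y_n} in X with {x, x_n} ⊆ g(n, y_n) for every n ∈ ℕ, the sequence x_n converges to x. Then X is quasi-developable and the subspace X^d is perfect (every closed subset of X^d is a Gδ-set in X^d). -/
open Set Topology Filter Function

/-- Theorem 2.1, (2) ⇒ (3). -/
theorem theorem_2_1_2_implies_3 {X : Type*} [TopologicalSpace X] [T2Space X]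
    (g : ℕ → X → Set X) (hg : IsGFunction g)
    (hconv : ∀ x ∈ nonIsolatedPoints X, ∀ xs ys : ℕ → X,
      (∀ n, x ∈ g n (ys n) ∧ xs n ∈ g n (ys n)) →
        Filter.Tendsto xs Filter.atTop (nhds x)) :
    (∃ 𝒰 : ℕ → Set (Set X), IsQuasiDevelopment 𝒰) ∧
      ∀ C : Set ↥(nonIsolatedPoints X), IsClosed C → IsGδ C := by
  classical
  constructor
  · refine ⟨fun n => match n with
      | 0 => {S : Set X | ∃ x : X, IsOpen ({x} : Set X) ∧ S = {x}}
      | n+1 => Set.range (g n), ?_, ?_⟩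
    · rintro (_|n) P hP
      · obtain ⟨x, hx, rfl⟩ := hP; exact hx
      · obtain ⟨y, rfl⟩ := hP; exact hg.1 n y
    · intro x U hxU hU
      by_cases hx : x ∈ nonIsolatedPoints X
      · by_contra hcon
        push_neg at hcon
        have hst : ∀ n, x ∈ stpt x (Set.range (g n)) := fun n =>
          ⟨g n x, ⟨⟨x, rfl⟩, hg.2.1 n x⟩, hg.2.1 n x⟩
        have h : ∀ n, ∃ y : X, x ∈ g n y ∧ ∃ z, z ∈ g n y ∧ z ∉ U := by
          intro n
          have h2 := hcon (n+1) (hst n)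
          rw [Set.not_subset] at h2
          obtain ⟨z, hz, hzU⟩ := h2
          obtain ⟨P, ⟨⟨y, rfl⟩, hxP⟩, hzP⟩ := hz
          exact ⟨y, hxP, z, hzP, hzU⟩
        choose ys hxy zs hzy hzU using h
        have htend := hconv x hx zs ys (fun n => ⟨hxy n, hzy n⟩)
        have := htend.eventually (hU.eventually_mem hxU)
        obtain ⟨n, hn⟩ := this.exists
        exact hzU n hn
      · simp only [nonIsolatedPoints, Set.mem_setOf_eq, not_not] at hx
        refine ⟨0, ⟨{x}, ⟨⟨x, hx, rfl⟩, rfl⟩, rfl⟩, ?_⟩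
        rintro z ⟨P, ⟨⟨w, hw, rfl⟩, hxP⟩, hzP⟩
        rw [Set.mem_singleton_iff] at hxP hzP
        subst hxP; subst hzP; exact hxU
  · intro C hC
    have key : C = ⋂ n, (Subtype.val ⁻¹' (⋃ y ∈ C, g n (y : X)) :
        Set ↥(nonIsolatedPoints X)) := by
      ext x
      simp only [Set.mem_iInter, Set.mem_preimage, Set.mem_iUnion]
      constructor
      · exact fun hx n => ⟨x, hx, hg.2.1 n x⟩
      · intro h
        choose ys hysC hxg using h
        have htend : Tendsto (fun n => ((ys n : ↥(nonIsolatedPoints X)) : X))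
            atTop (nhds (x : X)) :=
          hconv x x.2 _ (fun n => (ys n : X)) (fun n => ⟨hxg n, hg.2.1 n _⟩)
        have htend' : Tendsto ys atTop (nhds x) := tendsto_subtype_rng.2 htend
        have : x ∈ closure C :=
          mem_closure_of_tendsto htend' (Filter.Eventually.of_forall hysC)
        rwa [hC.closure_eq] at this
    rw [key]
    exact IsGδ.iInter_of_isOpen fun n =>
      (isOpen_biUnion (f := fun y : ↥(nonIsolatedPoints X) => g n (y : X)) fun y _ => hg.1 n (y : X)).preimage continuous_subtype_val
end

section
/- For a Hausdorff topological space X, the subspace X^d of non-isolated points is metacompact if and only if every open cover of X has an open refinement that is point-finite at non-isolated points. -/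
open Set Topology Filter Function

/-- A topological space is metacompact if every open cover has a point-finite
open refinement. -/
def IsMetacompactSpace (Y : Type*) [TopologicalSpace Y] : Prop :=
  ∀ 𝒰 : Set (Set Y), (∀ U ∈ 𝒰, IsOpen U) → ⋃₀ 𝒰 = Set.univ →
    ∃ 𝒱 : Set (Set Y), (∀ V ∈ 𝒱, IsOpen V) ∧ ⋃₀ 𝒱 = Set.univ ∧
      (∀ V ∈ 𝒱, ∃ U ∈ 𝒰, V ⊆ U) ∧ ∀ y : Y, {V ∈ 𝒱 | y ∈ V}.Finite

/-- Lemma 3.1: For a Hausdorff space `X`, `X^d` is a metacompact subspace of `X`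
iff every open cover of `X` has an open refinement which is point-finite at
non-isolated points. -/
theorem lemma_3_1 {X : Type*} [TopologicalSpace X] [T2Space X] :
    IsMetacompactSpace ↥(nonIsolatedPoints X) ↔
      ∀ 𝒰 : Set (Set X), (∀ U ∈ 𝒰, IsOpen U) → ⋃₀ 𝒰 = Set.univ →
        ∃ 𝒱 : Set (Set X), (∀ V ∈ 𝒱, IsOpen V) ∧ ⋃₀ 𝒱 = Set.univ ∧
          (∀ V ∈ 𝒱, ∃ U ∈ 𝒰, V ⊆ U) ∧
          ∀ x ∈ nonIsolatedPoints X, {V ∈ 𝒱 | x ∈ V}.Finite := by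
  constructor
  · -- metacompact subspace → refinement point-finite at non-isolated points
    intro hmc 𝒰 hopen hcov
    obtain ⟨𝒲, hWopen, hWcov, hWref, hWpf⟩ := hmc
      ((fun U => (Subtype.val ⁻¹' U : Set ↥(nonIsolatedPoints X))) '' 𝒰)
      (by rintro _ ⟨U, hU, rfl⟩; exact (hopen U hU).preimage continuous_subtype_val)
      (by
        ext x
        simp only [mem_sUnion, mem_univ, iff_true]
        have : (x : X) ∈ ⋃₀ 𝒰 := hcov ▸ mem_univ _
        obtain ⟨U, hU, hxU⟩ := this
        exact ⟨Subtype.val ⁻¹' U, ⟨U, hU, rfl⟩, hxU⟩)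
    have key : ∀ W : Set ↥(nonIsolatedPoints X), ∃ G : Set X, IsOpen G ∧
        (W ∈ 𝒲 → (∃ U ∈ 𝒰, G ⊆ U) ∧ Subtype.val ⁻¹' G = W) := by
      intro W
      by_cases hW : W ∈ 𝒲
      · obtain ⟨O, hO, hOW⟩ := isOpen_induced_iff.mp (hWopen W hW)
        obtain ⟨V, hV, hWV⟩ := hWref W hW
        obtain ⟨U, hU, rfl⟩ := hV
        refine ⟨O ∩ U, hO.inter (hopen U hU), fun _ => ⟨⟨U, hU, inter_subset_right⟩, ?_⟩⟩
        rw [preimage_inter, hOW, inter_eq_left.mpr hWV]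
      · exact ⟨∅, isOpen_empty, fun h => absurd h hW⟩
    choose g hgopen hg using key
    refine ⟨(fun W => g W) '' 𝒲 ∪ {s | ∃ x : X, IsOpen ({x} : Set X) ∧ s = {x}},
      ?_, ?_, ?_, ?_⟩
    · rintro V (⟨W, hW, rfl⟩ | ⟨x, hx, rfl⟩)
      · exact hgopen W
      · exact hx
    · ext x
      simp only [mem_sUnion, mem_univ, iff_true]
      by_cases hx : IsOpen ({x} : Set X)
      · exact ⟨{x}, Or.inr ⟨x, hx, rfl⟩, rfl⟩
      · have hxd : x ∈ nonIsolatedPoints X := hx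
        have : (⟨x, hxd⟩ : ↥(nonIsolatedPoints X)) ∈ ⋃₀ 𝒲 := hWcov ▸ mem_univ _
        obtain ⟨W, hW, hxW⟩ := this
        refine ⟨g W, Or.inl ⟨W, hW, rfl⟩, ?_⟩
        have heq := (hg W hW).2
        rw [← heq] at hxW
        exact hxW
    · rintro V (⟨W, hW, rfl⟩ | ⟨x, hx, rfl⟩)
      · exact (hg W hW).1
      · have : x ∈ ⋃₀ 𝒰 := hcov ▸ mem_univ _
        obtain ⟨U, hU, hxU⟩ := this
        exact ⟨U, hU, singleton_subset_iff.mpr hxU⟩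
    · intro x hx
      have hfin := (hWpf ⟨x, hx⟩).image (fun W => g W)
      refine hfin.subset ?_
      rintro V ⟨hV, hxV⟩
      rcases hV with ⟨W, hW, rfl⟩ | ⟨y, hy, rfl⟩
      · refine ⟨W, ⟨hW, ?_⟩, rfl⟩
        have := (hg W hW).2
        exact this ▸ (show (⟨x, hx⟩ : ↥(nonIsolatedPoints X)) ∈ Subtype.val ⁻¹' (g W) from hxV)
      · exact absurd (mem_singleton_iff.mp hxV ▸ hy) hx
  · -- refinement property → metacompact subspace
    intro h 𝒰' hopen' hcov'
    have key : ∀ U' : Set ↥(nonIsolatedPoints X), ∃ O : Set X, IsOpen O ∧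
        (U' ∈ 𝒰' → Subtype.val ⁻¹' O = U') := by
      intro U'
      by_cases hU : U' ∈ 𝒰'
      · obtain ⟨O, hO, hOU⟩ := isOpen_induced_iff.mp (hopen' U' hU)
        exact ⟨O, hO, fun _ => hOU⟩
      · exact ⟨∅, isOpen_empty, fun hh => absurd hh hU⟩
    choose f hfopen hf using key
    obtain ⟨𝒱, hVopen, hVcov, hVref, hVpf⟩ := h
      ((fun U' => f U') '' 𝒰' ∪ {s | ∃ x : X, IsOpen ({x} : Set X) ∧ s = {x}})
      (by rintro _ (⟨U', hU', rfl⟩ | ⟨x, hx, rfl⟩); exacts [hfopen U', hx])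
      (by
        ext x
        simp only [mem_sUnion, mem_univ, iff_true]
        by_cases hx : IsOpen ({x} : Set X)
        · exact ⟨{x}, Or.inr ⟨x, hx, rfl⟩, rfl⟩
        · have hxd : x ∈ nonIsolatedPoints X := hx
          have : (⟨x, hxd⟩ : ↥(nonIsolatedPoints X)) ∈ ⋃₀ 𝒰' := hcov' ▸ mem_univ _
          obtain ⟨U', hU', hxU⟩ := this
          refine ⟨f U', Or.inl ⟨U', hU', rfl⟩, ?_⟩
          have heq := hf U' hU'
          rw [← heq] at hxU
          exact hxU)
    refine ⟨(fun V => (Subtype.val ⁻¹' V : Set ↥(nonIsolatedPoints X))) ''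
        {V ∈ 𝒱 | ((Subtype.val ⁻¹' V : Set ↥(nonIsolatedPoints X))).Nonempty},
      ?_, ?_, ?_, ?_⟩
    · rintro _ ⟨V, ⟨hV, -⟩, rfl⟩
      exact (hVopen V hV).preimage continuous_subtype_val
    · ext x
      simp only [mem_sUnion, mem_univ, iff_true]
      have : (x : X) ∈ ⋃₀ 𝒱 := hVcov ▸ mem_univ _
      obtain ⟨V, hV, hxV⟩ := this
      exact ⟨Subtype.val ⁻¹' V, ⟨V, ⟨hV, ⟨x, hxV⟩⟩, rfl⟩, hxV⟩
    · rintro _ ⟨V, ⟨hV, hne⟩, rfl⟩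
      obtain ⟨B, hB, hVB⟩ := hVref V hV
      rcases hB with ⟨U', hU', rfl⟩ | ⟨y, hy, rfl⟩
      · exact ⟨U', hU', (hf U' hU') ▸ preimage_mono hVB⟩
      · obtain ⟨z, hz⟩ := hne
        have hzy : (z : X) = y := mem_singleton_iff.mp (hVB hz)
        exact absurd (hzy ▸ hy) z.2
    · intro y
      have hfin := (hVpf (y : X) y.2).image
        (fun V => (Subtype.val ⁻¹' V : Set ↥(nonIsolatedPoints X)))
      refine hfin.subset ?_
      rintro _ ⟨⟨V, ⟨hV, hne⟩, rfl⟩, hyV⟩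
      exact ⟨V, ⟨hV, hyV⟩, rfl⟩
end

section
/- Let M be a metric space, X a Hausdorff topological space, and f : M → X a continuous open surjection such that the boundary ∂f⁻¹(x) of each fiber is compact. Then the subspace X^d of non-isolated points of X is metacompact. -/
open Set Topology Filter Function

/-- The image of a paracompact space under a continuous open surjection with
compact fibers is metacompact. -/
lemma aux_metacompact_of_open_compact_map {Z Y : Type*} [TopologicalSpace Z]
    [ParacompactSpace Z] [TopologicalSpace Y] (g : Z → Y) (hgc : Continuous g)
    (hgo : IsOpenMap g) (hgs : Function.Surjective g)
    (hgk : ∀ y : Y, IsCompact (g ⁻¹' {y})) : IsMetacompactSpace Y := by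
  intro 𝒰 hUo hUc
  obtain ⟨v, hvo, hvc, hvlf, hvsub⟩ := precise_refinement
    (fun U : 𝒰 => g ⁻¹' (U : Set Y))
    (fun U => (hUo U U.2).preimage hgc)
    (by
      ext z
      simp only [mem_iUnion, mem_univ, iff_true, mem_preimage]
      have : g z ∈ ⋃₀ 𝒰 := hUc ▸ mem_univ _
      obtain ⟨U, hU, hz⟩ := this
      exact ⟨⟨U, hU⟩, hz⟩)
  refine ⟨Set.range (fun U : 𝒰 => g '' v U), ?_, ?_, ?_, ?_⟩
  · rintro V ⟨U, rfl⟩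
    exact hgo _ (hvo U)
  · apply eq_univ_of_univ_subset
    intro y _
    obtain ⟨z, rfl⟩ := hgs y
    have hz : z ∈ ⋃ U, v U := hvc ▸ mem_univ _
    obtain ⟨U, hU⟩ := mem_iUnion.1 hz
    exact ⟨g '' v U, ⟨U, rfl⟩, ⟨z, hU, rfl⟩⟩
  · rintro V ⟨U, rfl⟩
    refine ⟨U, U.2, ?_⟩
    rintro y ⟨z, hz, rfl⟩
    exact hvsub U hz
  · intro y
    have hfin : {U : 𝒰 | (v U ∩ g ⁻¹' {y}).Nonempty}.Finite :=
      hvlf.finite_nonempty_inter_compact (hgk y)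
    refine (hfin.image (fun U => g '' v U)).subset ?_
    rintro V ⟨⟨U, rfl⟩, hy⟩
    obtain ⟨z, hz, hgz⟩ := hy
    exact ⟨U, ⟨z, hz, by simp [hgz]⟩, rfl⟩

/-- Lemma 3.2, (1) ⇒ (4), second half: if `X` is the image of a metric space under
a continuous open boundary-compact surjection, then `X^d` is metacompact. -/
theorem lemma_3_2_1_implies_metacompact {M X : Type*} [MetricSpace M]
    [TopologicalSpace X] [T2Space X] (f : M → X)
    (hf : Continuous f) (ho : IsOpenMap f) (hs : Function.Surjective f)
    (hb : ∀ x : X, IsCompact (frontier (f ⁻¹' {x}))) :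
    IsMetacompactSpace ↥(nonIsolatedPoints X) := by
  -- fibers over non-isolated points are compact
  have hfiber : ∀ x ∈ nonIsolatedPoints X, IsCompact (f ⁻¹' {x}) := by
    intro x hx
    have hcl : IsClosed (f ⁻¹' {x}) := isClosed_singleton.preimage hf
    have hint : interior (f ⁻¹' {x}) = ∅ := by
      by_contra h
      obtain ⟨m, hm⟩ := nonempty_iff_ne_empty.mpr h
      have hop : IsOpen (f '' interior (f ⁻¹' {x})) := ho _ isOpen_interior
      have heq : f '' interior (f ⁻¹' {x}) = {x} := by
        apply Subset.antisymm
        · rintro _ ⟨z, hz, rfl⟩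
          exact mem_preimage.mp (interior_subset hz)
        · rw [singleton_subset_iff]
          exact ⟨m, hm, mem_singleton_iff.mp (mem_preimage.mp (interior_subset hm))⟩
      exact hx (heq ▸ hop)
    have hfr : frontier (f ⁻¹' {x}) = f ⁻¹' {x} := by
      rw [frontier, hcl.closure_eq, hint, diff_empty]
    rw [← hfr]
    exact hb x
  -- restrict `f` to a map from the metric subspace `f ⁻¹' X^d` onto `X^d`
  let g : ↥(f ⁻¹' (nonIsolatedPoints X)) → ↥(nonIsolatedPoints X) :=
    fun z => ⟨f z.1, z.2⟩
  have hgc : Continuous g :=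
    Continuous.subtype_mk (hf.comp continuous_subtype_val) _
  have hgs : Function.Surjective g := by
    rintro ⟨x, hx⟩
    obtain ⟨m, rfl⟩ := hs x
    exact ⟨⟨m, hx⟩, rfl⟩
  have hgo : IsOpenMap g := by
    intro U hU
    obtain ⟨W, hW, rfl⟩ := isOpen_induced_iff.1 hU
    have himg : g '' (Subtype.val ⁻¹' W) = Subtype.val ⁻¹' (f '' W) := by
      ext y
      constructor
      · rintro ⟨z, hz, rfl⟩
        exact ⟨z.1, hz, rfl⟩
      · rintro ⟨w, hw, hwy⟩
        have hwm : f w ∈ nonIsolatedPoints X := hwy ▸ y.2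
        exact ⟨⟨w, hwm⟩, hw, Subtype.ext hwy⟩
    rw [himg]
    exact (ho W hW).preimage continuous_subtype_val
  have hgk : ∀ y : ↥(nonIsolatedPoints X), IsCompact (g ⁻¹' {y}) := by
    rintro ⟨x, hx⟩
    have h2 : g ⁻¹' {(⟨x, hx⟩ : ↥(nonIsolatedPoints X))}
        = Subtype.val ⁻¹' (f ⁻¹' {x}) := by
      ext z
      simp [g, Subtype.ext_iff]
    rw [h2, Subtype.isCompact_iff]
    have h3 : (Subtype.val '' (Subtype.val ⁻¹' (f ⁻¹' {x}) :
        Set ↥(f ⁻¹' (nonIsolatedPoints X))) : Set M) = f ⁻¹' {x} := by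
      rw [Subtype.image_preimage_coe]
      refine inter_eq_right.2 (fun m hm => ?_)
      have hmx : f m = x := hm
      rw [mem_preimage, hmx]
      exact hx
    rw [h3]
    exact hfiber x hx
  exact aux_metacompact_of_open_compact_map g hgc hgo hgs hgk
end

section
/- If a Hausdorff topological space X has a development at non-isolated points and the subspace X^d is metacompact, then X has a development at non-isolated points {𝒱_n} in which each 𝒱_n is point-finite at non-isolated points. -/
open Set Topology Filter Function

/-- Lemma 3.2, (4) ⇒ (3): a development at non-isolated points together with
metacompactness of `X^d` yields a point-finite development at non-isolated points. -/
theorem lemma_3_2_4_implies_3 {X : Type*} [TopologicalSpace X] [T2Space X]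
    (hdev : ∃ 𝒰 : ℕ → Set (Set X), IsDevelopmentAtNonIsolatedPoints 𝒰)
    (hmeta : IsMetacompactSpace ↥(nonIsolatedPoints X)) :
    ∃ 𝒱 : ℕ → Set (Set X), IsDevelopmentAtNonIsolatedPoints 𝒱 ∧
      ∀ n, ∀ x ∈ nonIsolatedPoints X, {V ∈ 𝒱 n | x ∈ V}.Finite := by
  classical
  obtain ⟨𝒰, h𝒰open, h𝒰cov, h𝒰star⟩ := hdev
  have covn : ∀ n, ⋃₀ ((fun U => (Subtype.val : nonIsolatedPoints X → X) ⁻¹' U) '' 𝒰 n)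
      = Set.univ := by
    intro n
    ext y
    simp only [Set.mem_sUnion, Set.mem_image, Set.mem_univ, iff_true]
    have : (y : X) ∈ ⋃₀ 𝒰 n := by rw [h𝒰cov n]; trivial
    obtain ⟨U, hU, hy⟩ := this
    exact ⟨_, ⟨U, hU, rfl⟩, hy⟩
  have hW := fun n => hmeta ((fun U => (Subtype.val : nonIsolatedPoints X → X) ⁻¹' U) '' 𝒰 n)
    (by rintro V ⟨U, hU, rfl⟩; exact (h𝒰open n U hU).preimage continuous_subtype_val)
    (covn n)
  choose 𝒲 hWopen hWcov hWref hWpf using hW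
  have hchoice : ∀ n (W : Set (nonIsolatedPoints X)), ∃ O U, W ∈ 𝒲 n →
      IsOpen O ∧ W = (Subtype.val : nonIsolatedPoints X → X) ⁻¹' O ∧ U ∈ 𝒰 n ∧
        W ⊆ (Subtype.val : nonIsolatedPoints X → X) ⁻¹' U := by
    intro n W
    by_cases hWn : W ∈ 𝒲 n
    · obtain ⟨O, hO, hOW⟩ := isOpen_induced_iff.mp (hWopen n W hWn)
      obtain ⟨U', ⟨U, hU, rfl⟩, hsub⟩ := hWref n W hWn
      exact ⟨O, U, fun _ => ⟨hO, hOW.symm, hU, hsub⟩⟩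
    · exact ⟨∅, ∅, fun h => absurd h hWn⟩
  choose O Uf hOU using hchoice
  refine ⟨fun n => ((fun W => O n W ∩ Uf n W) '' 𝒲 n) ∪
      ((fun x => ({x} : Set X)) '' (nonIsolatedPoints X)ᶜ), ⟨?_, ?_, ?_⟩, ?_⟩
  · rintro n V (⟨W, hWn, rfl⟩ | ⟨z, hz, rfl⟩)
    · exact ((hOU n W hWn).1).inter (h𝒰open n _ (hOU n W hWn).2.2.1)
    · exact not_not.mp hz
  · intro n
    ext x
    simp only [Set.mem_univ, iff_true]
    by_cases hx : x ∈ nonIsolatedPoints X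
    · have : (⟨x, hx⟩ : nonIsolatedPoints X) ∈ ⋃₀ 𝒲 n := by rw [hWcov n]; trivial
      obtain ⟨W, hWn, hxW⟩ := this
      obtain ⟨hO, hWeq, hU, hWsub⟩ := hOU n W hWn
      refine ⟨O n W ∩ Uf n W, Or.inl ⟨W, hWn, rfl⟩, ?_, ?_⟩
      · have := hWeq ▸ hxW; exact this
      · exact hWsub hxW
    · exact ⟨{x}, Or.inr ⟨x, hx, rfl⟩, rfl⟩
  · intro x hx U hxU hUopen
    obtain ⟨n, hn⟩ := h𝒰star x hx U hxU hUopen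
    refine ⟨n, ?_⟩
    intro y hy
    obtain ⟨V, ⟨hV𝒱, hxV⟩, hyV⟩ := hy
    rcases hV𝒱 with ⟨W, hWn, rfl⟩ | ⟨z, hz, rfl⟩
    · obtain ⟨hO, hWeq, hU, hWsub⟩ := hOU n W hWn
      refine hn ⟨Uf n W, ⟨hU, hxV.2⟩, hyV.2⟩
    · exact absurd (hxV ▸ hx) hz
  · intro n x hx
    have hF : {W ∈ 𝒲 n | (⟨x, hx⟩ : nonIsolatedPoints X) ∈ W}.Finite := hWpf n ⟨x, hx⟩
    refine (hF.image (fun W => O n W ∩ Uf n W)).subset ?_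
    rintro V ⟨(⟨W, hWn, rfl⟩ | ⟨z, hz, rfl⟩), hxV⟩
    · have hmem : (⟨x, hx⟩ : nonIsolatedPoints X) ∈ W := by
        rw [(hOU n W hWn).2.1]; exact hxV.1
      exact ⟨W, ⟨hWn, hmem⟩, rfl⟩
    · exact absurd (hxV ▸ hx) hz
end

section
/- There exist Hausdorff topological spaces X and Y and a continuous closed surjection f : X → Y such that X is regular and has a uniform base at non-isolated points, Y is first-countable, and f is not boundary-compact, i.e., there exists y ∈ Y for which the boundary ∂f⁻¹(y) is not compact. (Such an example is given by the quotient map of the Isbell–Mrówka space ψ(ℕ) = 𝒜 ∪ ℕ, for a maximal almost disjoint family 𝒜 of infinite subsets of ℕ, collapsing 𝒜 to a single point.) -/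
open Set Topology Filter Function

/-- A uniform base at non-isolated points for `X`. -/
def IsUniformBaseAtNonIsolatedPoints {X : Type*} [TopologicalSpace X]
    (𝒰 : Set (Set X)) : Prop :=
  TopologicalSpace.IsTopologicalBasis 𝒰 ∧
    ∀ x ∈ nonIsolatedPoints X, ∀ 𝒰' ⊆ {P ∈ 𝒰 | x ∈ P}, 𝒰'.Countable → 𝒰'.Infinite →
      ∀ U : Set X, x ∈ U → IsOpen U → ∃ P ∈ 𝒰', P ⊆ U

namespace Example37

open scoped OnePoint

/-! ### Existence of an infinite maximal almost disjoint family on `ℕ`. -/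

theorem exists_mad :
    ∃ 𝒜 : Set (Set ℕ), 𝒜.Infinite ∧ (∀ A ∈ 𝒜, A.Infinite) ∧
      (∀ A ∈ 𝒜, ∀ B ∈ 𝒜, A ≠ B → (A ∩ B).Finite) ∧
      (∀ B : Set ℕ, B.Infinite → ∃ A ∈ 𝒜, (A ∩ B).Infinite) := by
  classical
  -- the starting almost disjoint family: columns of a pairing
  set C : ℕ → Set ℕ := fun k => Set.range (Nat.pair k) with hC
  have hCinj : Function.Injective C := by
    intro k k' h
    have : Nat.pair k 0 ∈ C k' := h ▸ Set.mem_range_self 0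
    rcases this with ⟨n, hn⟩
    exact (Nat.pair_eq_pair.mp hn).1.symm
  have hCinf : ∀ k, (C k).Infinite :=
    fun k => Set.infinite_range_of_injective fun a b h => (Nat.pair_eq_pair.mp h).2
  have hCdisj : ∀ k k', k ≠ k' → C k ∩ C k' = ∅ := by
    intro k k' hkk'
    ext x
    simp only [Set.mem_inter_iff, Set.mem_empty_iff_false, iff_false]
    rintro ⟨⟨a, rfl⟩, ⟨b, hb⟩⟩
    exact hkk' (Nat.pair_eq_pair.mp hb).1.symm
  set S : Set (Set (Set ℕ)) :=
    {𝒜 | (∀ A ∈ 𝒜, A.Infinite) ∧ ∀ A ∈ 𝒜, ∀ B ∈ 𝒜, A ≠ B → (A ∩ B).Finite} with hS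
  have hA0 : Set.range C ∈ S := by
    constructor
    · rintro A ⟨k, rfl⟩; exact hCinf k
    · rintro A ⟨k, rfl⟩ B ⟨k', rfl⟩ hne
      have : k ≠ k' := fun h => hne (by rw [h])
      rw [hCdisj k k' this]; exact Set.finite_empty
  have hchain : ∀ c ⊆ S, IsChain (· ⊆ ·) c → c.Nonempty →
      ∃ ub ∈ S, ∀ s ∈ c, s ⊆ ub := by
    intro c hcS hchain hcne
    refine ⟨⋃₀ c, ⟨?_, ?_⟩, fun s hs => Set.subset_sUnion_of_mem hs⟩
    · rintro A ⟨u, hu, hAu⟩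
      exact (hcS hu).1 A hAu
    · rintro A ⟨u, hu, hAu⟩ B ⟨v, hv, hBv⟩ hne
      rcases hchain.total hu hv with h | h
      · exact (hcS hv).2 A (h hAu) B hBv hne
      · exact (hcS hu).2 A hAu B (h hBv) hne
  obtain ⟨𝒜, h0sub, h𝒜⟩ := zorn_subset_nonempty S hchain (Set.range C) hA0
  have h𝒜S : 𝒜 ∈ S := h𝒜.prop
  refine ⟨𝒜, ?_, h𝒜S.1, h𝒜S.2, ?_⟩
  · exact ((Set.infinite_range_of_injective hCinj)).mono h0sub
  · intro B hBinf
    by_contra h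
    push_neg at h
    have hfin : ∀ A ∈ 𝒜, (A ∩ B).Finite := by
      intro A hA
      exact h A hA
    have hBnot : B ∉ 𝒜 := by
      intro hB
      have := hfin B hB
      rw [Set.inter_self] at this
      exact hBinf this
    have hins : insert B 𝒜 ∈ S := by
      constructor
      · rintro A (rfl | hA)
        · exact hBinf
        · exact h𝒜S.1 A hA
      · rintro A (rfl | hA) A' (rfl | hA') hne
        · exact absurd rfl hne
        · rw [Set.inter_comm]; exact hfin A' hA'
        · exact hfin A hA
        · exact h𝒜S.2 A hA A' hA' hne
    have : insert B 𝒜 ⊆ 𝒜 := h𝒜.2 hins (Set.subset_insert B 𝒜)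
    exact hBnot (this (Set.mem_insert B 𝒜))

/-! ### The Isbell–Mrówka space -/

/-- The Isbell–Mrówka space `ψ(ℕ) = 𝒜 ⊕ ℕ`. -/
def X (𝒜 : Set (Set ℕ)) : Type := {A : Set ℕ // A ∈ 𝒜} ⊕ ℕ

variable {𝒜 : Set (Set ℕ)}

instance : TopologicalSpace (X 𝒜) where
  IsOpen U := ∀ a : {A : Set ℕ // A ∈ 𝒜}, Sum.inl a ∈ U →
    ((a : Set ℕ) \ {n | Sum.inr n ∈ U}).Finite
  isOpen_univ := by intro a _; exact Set.finite_empty.subset fun k hk => hk.2 trivial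
  isOpen_inter := by
    intro U V hU hV a ha
    refine ((hU a ha.1).union (hV a ha.2)).subset ?_
    intro k hk
    by_cases h : Sum.inr k ∈ U
    · exact Or.inr ⟨hk.1, fun h' => hk.2 ⟨h, h'⟩⟩
    · exact Or.inl ⟨hk.1, h⟩
  isOpen_sUnion := by
    rintro s hs a ⟨U, hU, haU⟩
    exact (hs U hU a haU).subset fun k hk => ⟨hk.1, fun h' => hk.2 ⟨U, hU, h'⟩⟩

lemma isOpen_iff {U : Set (X 𝒜)} :
    IsOpen U ↔ ∀ a : {A : Set ℕ // A ∈ 𝒜}, Sum.inl a ∈ U →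
      ((a : Set ℕ) \ {n | Sum.inr n ∈ U}).Finite := Iff.rfl

lemma isOpen_of_no_inl {U : Set (X 𝒜)} (h : ∀ a, Sum.inl a ∉ U) : IsOpen U :=
  fun a ha => absurd ha (h a)

/-- The basic clopen neighborhoods `{A} ∪ (A \ [0, m))` of `A ∈ 𝒜`. -/
def V (a : {A : Set ℕ // A ∈ 𝒜}) (m : ℕ) : Set (X 𝒜) :=
  insert (Sum.inl a) (Sum.inr '' {k | k ∈ (a : Set ℕ) ∧ m ≤ k})

lemma inl_mem_V {a b : {A : Set ℕ // A ∈ 𝒜}} {m : ℕ} :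
    Sum.inl b ∈ V a m ↔ b = a := by
  simp only [V, Set.mem_insert_iff, Set.mem_image]
  constructor
  · rintro (h | ⟨k, _, h⟩)
    · exact Sum.inl.inj h
    · exact absurd h (by simp)
  · rintro rfl; exact Or.inl rfl

lemma inr_mem_V {a : {A : Set ℕ // A ∈ 𝒜}} {m k : ℕ} :
    Sum.inr k ∈ V a m ↔ k ∈ (a : Set ℕ) ∧ m ≤ k := by
  simp only [V, Set.mem_insert_iff, Set.mem_image]
  constructor
  · rintro (h | ⟨k', hk', h⟩)
    · exact absurd h (by simp)
    · exact (Sum.inr.inj h) ▸ hk'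
  · intro h; exact Or.inr ⟨k, h, rfl⟩

lemma isOpen_V (a : {A : Set ℕ // A ∈ 𝒜}) (m : ℕ) : IsOpen (V a m) := by
  intro b hb
  rcases inl_mem_V.mp hb with rfl
  refine (Set.finite_Iio m).subset ?_
  intro k hk
  simp only [Set.mem_diff, Set.mem_setOf_eq] at hk
  have : ¬ (k ∈ (b : Set ℕ) ∧ m ≤ k) := fun h => hk.2 (inr_mem_V.mpr h)
  push_neg at this
  exact this hk.1

lemma isClosed_V (had : ∀ A ∈ 𝒜, ∀ B ∈ 𝒜, A ≠ B → (A ∩ B).Finite)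
    (a : {A : Set ℕ // A ∈ 𝒜}) (m : ℕ) : IsClosed (V a m) := by
  rw [← isOpen_compl_iff]
  intro b hb
  have hba : b ≠ a := fun h => hb (h ▸ inl_mem_V.mpr rfl)
  have : ((b : Set ℕ) \ {n | Sum.inr n ∈ (V a m)ᶜ}) ⊆ (b : Set ℕ) ∩ (a : Set ℕ) := by
    intro k hk
    simp only [Set.mem_diff, Set.mem_setOf_eq, Set.mem_compl_iff, not_not] at hk
    exact ⟨hk.1, (inr_mem_V.mp (Classical.byContradiction fun h => hk.2 h : Sum.inr k ∈ V a m)).1⟩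
  exact (had b b.2 a a.2 (fun h => hba (Subtype.ext h))).subset this

lemma isOpen_singleton_inr (n : ℕ) : IsOpen ({Sum.inr n} : Set (X 𝒜)) :=
  isOpen_of_no_inl (fun a h => Sum.inl_ne_inr h)

lemma isClosed_singleton_inr (n : ℕ) : IsClosed ({Sum.inr n} : Set (X 𝒜)) := by
  rw [← isOpen_compl_iff]
  intro a _
  refine (Set.finite_singleton n).subset ?_
  intro k hk
  simp only [Set.mem_diff, Set.mem_setOf_eq, Set.mem_compl_iff, not_not,
    Set.mem_singleton_iff] at hk ⊢
  exact Sum.inr.inj (α := {A : Set ℕ // A ∈ 𝒜}) (Classical.byContradiction fun h => hk.2 h)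

/-- A bound above a finite set of naturals. -/
lemma exists_bound {s : Set ℕ} (hs : s.Finite) : ∃ b : ℕ, ∀ k ∈ s, k < b := by
  rcases hs.bddAbove with ⟨b, hb⟩
  exact ⟨b + 1, fun k hk => Nat.lt_succ_of_le (hb hk)⟩

lemma t2 (had : ∀ A ∈ 𝒜, ∀ B ∈ 𝒜, A ≠ B → (A ∩ B).Finite) : T2Space (X 𝒜) := by
  constructor
  intro x y hxy
  match x, y with
  | Sum.inr n, Sum.inr n' =>
    refine ⟨{Sum.inr n}, {Sum.inr n'}, isOpen_singleton_inr n, isOpen_singleton_inr n',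
      rfl, rfl, ?_⟩
    refine Set.disjoint_singleton.mpr ?_
    exact hxy
  | Sum.inl a, Sum.inr n =>
    refine ⟨V a (n + 1), {Sum.inr n}, isOpen_V a (n + 1), isOpen_singleton_inr n,
      inl_mem_V.mpr rfl, rfl, ?_⟩
    refine Set.disjoint_singleton_right.mpr ?_
    intro h
    exact absurd (inr_mem_V.mp h).2 (by omega)
  | Sum.inr n, Sum.inl a =>
    refine ⟨{Sum.inr n}, V a (n + 1), isOpen_singleton_inr n, isOpen_V a (n + 1),
      rfl, inl_mem_V.mpr rfl, ?_⟩
    refine Set.disjoint_singleton_left.mpr ?_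
    intro h
    exact absurd (inr_mem_V.mp h).2 (by omega)
  | Sum.inl a, Sum.inl b =>
    have hab : (a : Set ℕ) ≠ (b : Set ℕ) := by
      intro h
      exact hxy (congrArg Sum.inl (Subtype.ext h))
    obtain ⟨m, hm⟩ := exists_bound (had a a.2 b b.2 hab)
    refine ⟨V a m, V b m, isOpen_V a m, isOpen_V b m, inl_mem_V.mpr rfl, inl_mem_V.mpr rfl, ?_⟩
    rw [Set.disjoint_left]
    intro z hz1 hz2
    match z with
    | Sum.inl c =>
      rcases inl_mem_V.mp hz1 with rfl
      rcases inl_mem_V.mp hz2 with h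
      exact (hxy (congrArg Sum.inl h)).elim
    | Sum.inr k =>
      rcases inr_mem_V.mp hz1 with ⟨hk1, hmk⟩
      rcases inr_mem_V.mp hz2 with ⟨hk2, _⟩
      exact absurd (hm k ⟨hk1, hk2⟩) (by omega)

lemma regular (had : ∀ A ∈ 𝒜, ∀ B ∈ 𝒜, A ≠ B → (A ∩ B).Finite) :
    RegularSpace (X 𝒜) := by
  apply RegularSpace.of_exists_mem_nhds_isClosed_subset
  intro x s hs
  rcases mem_nhds_iff.mp hs with ⟨U, hUs, hU, hxU⟩
  match x with
  | Sum.inr n =>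
    exact ⟨{Sum.inr n}, (isOpen_singleton_inr n).mem_nhds rfl, isClosed_singleton_inr n,
      (Set.singleton_subset_iff.mpr (hUs hxU)).trans (subset_refl _)⟩
  | Sum.inl a =>
    obtain ⟨m, hm⟩ := exists_bound (hU a hxU)
    refine ⟨V a m, (isOpen_V a m).mem_nhds (inl_mem_V.mpr rfl), isClosed_V had a m, ?_⟩
    intro z hz
    match z with
    | Sum.inl b => rcases inl_mem_V.mp hz with rfl; exact hUs hxU
    | Sum.inr k =>
      rcases inr_mem_V.mp hz with ⟨hka, hmk⟩
      by_contra hzU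
      have hkd : k ∈ (a : Set ℕ) \ {n | Sum.inr n ∈ U} :=
        ⟨hka, fun h => hzU (hUs h)⟩
      exact absurd (hm k hkd) (by omega)

/-- The map collapsing `𝒜` to the point at infinity. -/
def f : X 𝒜 → OnePoint ℕ := Sum.elim (fun _ => ∞) (fun n => (n : OnePoint ℕ))

lemma continuous_f : Continuous (f (𝒜 := 𝒜)) := by
  rw [continuous_def]
  intro s hs
  intro a ha
  have hinf : ∞ ∈ s := ha
  have hfin : (((↑) : ℕ → OnePoint ℕ) ⁻¹' s)ᶜ.Finite := by
    have := (OnePoint.isOpen_iff_of_mem hinf).mp hs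
    exact this.2.finite_of_discrete
  refine hfin.subset ?_
  intro k hk
  simp only [Set.mem_diff, Set.mem_setOf_eq] at hk
  exact hk.2

lemma surjective_f (hne : 𝒜.Nonempty) : Function.Surjective (f (𝒜 := 𝒜)) := by
  intro y
  cases y with
  | infty => exact ⟨Sum.inl ⟨hne.choose, hne.choose_spec⟩, rfl⟩
  | coe n => exact ⟨Sum.inr n, rfl⟩

lemma isClosedMap_f (hmad : ∀ B : Set ℕ, B.Infinite → ∃ A ∈ 𝒜, (A ∩ B).Infinite) :
    IsClosedMap (f (𝒜 := 𝒜)) := by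
  intro C hC
  by_cases hc : ∃ a, Sum.inl a ∈ C
  · -- the image contains ∞, hence its complement is a set of naturals, which is open
    rcases hc with ⟨a, ha⟩
    have hinf : ∞ ∈ f '' C := ⟨Sum.inl a, ha, rfl⟩
    rw [← isOpen_compl_iff]
    rw [OnePoint.isOpen_iff_of_notMem (by simpa using hinf)]
    exact isOpen_discrete _
  · push_neg at hc
    -- the image is a finite set of naturals
    set B : Set ℕ := {n | Sum.inr n ∈ C} with hB
    have hBfin : B.Finite := by
      by_contra hBinf
      obtain ⟨A, hA, hAB⟩ := hmad B hBinf
      have hopen : IsOpen Cᶜ := hC.isOpen_compl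
      have := hopen ⟨A, hA⟩ (hc ⟨A, hA⟩)
      refine hAB ?_
      refine this.subset ?_
      intro k hk
      simp only [Set.mem_diff, Set.mem_setOf_eq, Set.mem_compl_iff, not_not]
      exact ⟨hk.1, fun h => h hk.2⟩
    have himg : f '' C = ((↑) : ℕ → OnePoint ℕ) '' B := by
      ext y
      constructor
      · rintro ⟨z, hz, rfl⟩
        match z with
        | Sum.inl a => exact absurd hz (hc a)
        | Sum.inr n => exact ⟨n, hz, rfl⟩
      · rintro ⟨n, hn, rfl⟩
        exact ⟨Sum.inr n, hn, rfl⟩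
    rw [himg]
    exact (hBfin.image _).isClosed

/-- The set of non-isolated points `𝒜 ⊆ ψ(ℕ)`. -/
def D (𝒜 : Set (Set ℕ)) : Set (X 𝒜) := {z | ∃ a, z = Sum.inl a}

lemma preimage_infty : f ⁻¹' ({∞} : Set (OnePoint ℕ)) = D 𝒜 := by
  ext z
  match z with
  | Sum.inl a =>
    simp only [Set.mem_preimage, Set.mem_singleton_iff, D, Set.mem_setOf_eq]
    exact ⟨fun _ => ⟨a, rfl⟩, fun _ => rfl⟩
  | Sum.inr n =>
    simp only [Set.mem_preimage, Set.mem_singleton_iff, D, Set.mem_setOf_eq]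
    constructor
    · intro h; exact absurd h (OnePoint.coe_ne_infty n)
    · rintro ⟨a, h⟩; exact absurd h (by simp)

lemma isClosed_D : IsClosed (D 𝒜) := by
  rw [← isOpen_compl_iff]
  exact isOpen_of_no_inl fun a ha => ha ⟨a, rfl⟩

lemma interior_D (hinf : ∀ A ∈ 𝒜, A.Infinite) :
    interior (D 𝒜) = ∅ := by
  by_contra h
  rcases Set.nonempty_iff_ne_empty.mpr h with ⟨z, hz⟩
  have hsub : interior (D 𝒜) ⊆ D 𝒜 := interior_subset
  rcases hsub hz with ⟨a, rfl⟩
  have hop : IsOpen (interior (D 𝒜)) := isOpen_interior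
  have hfin := isOpen_iff.mp hop a hz
  have hempty : {n | Sum.inr n ∈ interior (D 𝒜)} = ∅ := by
    ext n
    simp only [Set.mem_setOf_eq, Set.mem_empty_iff_false, iff_false]
    intro hn
    rcases hsub hn with ⟨b, hb⟩
    exact absurd hb (by simp)
  rw [hempty, Set.diff_empty] at hfin
  exact hinf a a.2 hfin

lemma not_compact_D (h𝒜 : 𝒜.Infinite) : ¬ IsCompact (D 𝒜) := by
  intro hK
  haveI : Infinite {A : Set ℕ // A ∈ 𝒜} := Set.infinite_coe_iff.mpr h𝒜
  obtain ⟨t, ht⟩ := hK.elim_finite_subcover (fun a => V a 0) (fun a => isOpen_V a 0)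
    (by
      rintro z ⟨b, rfl⟩
      exact Set.mem_iUnion.mpr ⟨b, inl_mem_V.mpr rfl⟩)
  obtain ⟨b, hb⟩ := Infinite.exists_notMem_finset t
  have : Sum.inl b ∈ ⋃ a ∈ t, V a 0 := ht ⟨b, rfl⟩
  rcases Set.mem_iUnion₂.mp this with ⟨a, hat, hmem⟩
  rcases inl_mem_V.mp hmem with rfl
  exact hb hat

/-! ### The uniform base at non-isolated points -/

def 𝒰 (𝒜 : Set (Set ℕ)) : Set (Set (X 𝒜)) :=
  {U | (∃ n : ℕ, U = {Sum.inr n}) ∨ ∃ a m, U = V a m}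

lemma basis_𝒰 : TopologicalSpace.IsTopologicalBasis (𝒰 𝒜) := by
  apply TopologicalSpace.isTopologicalBasis_of_isOpen_of_nhds
  · rintro u (⟨n, rfl⟩ | ⟨a, m, rfl⟩)
    · exact isOpen_singleton_inr n
    · exact isOpen_V a m
  · intro x u hxu hu
    match x with
    | Sum.inr n =>
      exact ⟨{Sum.inr n}, Or.inl ⟨n, rfl⟩, rfl, Set.singleton_subset_iff.mpr hxu⟩
    | Sum.inl a =>
      obtain ⟨m, hm⟩ := exists_bound (hu a hxu)
      refine ⟨V a m, Or.inr ⟨a, m, rfl⟩, inl_mem_V.mpr rfl, ?_⟩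
      intro z hz
      match z with
      | Sum.inl b => rcases inl_mem_V.mp hz with rfl; exact hxu
      | Sum.inr k =>
        rcases inr_mem_V.mp hz with ⟨hka, hmk⟩
        by_contra hzu
        exact absurd (hm k ⟨hka, fun h => hzu h⟩) (by omega)

/-- The tail sets of an infinite set are determined by their least element. -/
lemma V_eq_V_sInf (hinf : ((a : {A : Set ℕ // A ∈ 𝒜}) : Set ℕ).Infinite) (m : ℕ) :
    V a m = V a (sInf {k | k ∈ (a : Set ℕ) ∧ m ≤ k}) := by
  set T : Set ℕ := {k | k ∈ (a : Set ℕ) ∧ m ≤ k} with hT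
  have hTne : T.Nonempty := by
    obtain ⟨k, hk, hmk⟩ := hinf.exists_gt m
    exact ⟨k, hk, le_of_lt hmk⟩
  have hmem : sInf T ∈ T := Nat.sInf_mem hTne
  ext z
  match z with
  | Sum.inl b =>
    constructor <;> intro h <;> exact inl_mem_V.mpr (inl_mem_V.mp h)
  | Sum.inr k =>
    constructor
    · intro h
      rcases inr_mem_V.mp h with ⟨hka, hmk⟩
      exact inr_mem_V.mpr ⟨hka, Nat.sInf_le ⟨hka, hmk⟩⟩
    · intro h
      rcases inr_mem_V.mp h with ⟨hka, hik⟩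
      exact inr_mem_V.mpr ⟨hka, le_trans hmem.2 hik⟩

lemma uniform_base (hinf : ∀ A ∈ 𝒜, A.Infinite) :
    IsUniformBaseAtNonIsolatedPoints (𝒰 𝒜) := by
  refine ⟨basis_𝒰, ?_⟩
  intro x hx 𝒰' h𝒰' _ h𝒰'inf u hxu hu
  -- a non-isolated point must be of the form `Sum.inl a`
  match x with
  | Sum.inr n => exact absurd (isOpen_singleton_inr n) hx
  | Sum.inl a =>
    -- every member of `𝒰'` is a tail neighborhood `V a m`
    have hform : ∀ P ∈ 𝒰', ∃ m, P = V a m := by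
      intro P hP
      rcases h𝒰' hP with ⟨hP𝒰, hPa⟩
      rcases hP𝒰 with ⟨n, rfl⟩ | ⟨b, m, rfl⟩
      · exact absurd hPa (fun h => Sum.inl_ne_inr h)
      · rcases inl_mem_V.mp hPa with rfl
        exact ⟨m, rfl⟩
    set g : Set (X 𝒜) → ℕ := fun P => sInf {k | Sum.inr k ∈ P} with hg
    have hgP : ∀ P ∈ 𝒰', P = V a (g P) := by
      intro P hP
      obtain ⟨m, rfl⟩ := hform P hP
      have : {k | Sum.inr k ∈ V a m} = {k | k ∈ (a : Set ℕ) ∧ m ≤ k} := by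
        ext k; exact inr_mem_V
      rw [hg]
      simp only [this]
      exact V_eq_V_sInf (hinf a a.2) m
    have hginj : Set.InjOn g 𝒰' := by
      intro P hP Q hQ hPQ
      rw [hgP P hP, hgP Q hQ, hPQ]
    have himg : (g '' 𝒰').Infinite := h𝒰'inf.image hginj
    obtain ⟨m, hm⟩ := exists_bound (hu a hxu)
    obtain ⟨v, ⟨P, hP, rfl⟩, hv⟩ := himg.exists_gt m
    refine ⟨P, hP, ?_⟩
    rw [hgP P hP]
    intro z hz
    match z with
    | Sum.inl b => rcases inl_mem_V.mp hz with rfl; exact hxu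
    | Sum.inr k =>
      rcases inr_mem_V.mp hz with ⟨hka, hik⟩
      by_contra hzu
      have : k ∈ (a : Set ℕ) \ {n | Sum.inr n ∈ u} := ⟨hka, fun h => hzu h⟩
      have hkm := hm k this
      omega

instance : FirstCountableTopology (OnePoint ℕ) := by
  constructor
  intro x
  cases x with
  | infty =>
    rw [OnePoint.nhds_infty_eq, Filter.coclosedCompact_eq_cocompact, cocompact_eq_cofinite,
      Nat.cofinite_eq_atTop]
    infer_instance
  | coe n =>
    rw [OnePoint.nhds_coe_eq]
    infer_instance

end Example37

/-- Example 3.7: There is a closed map `f : X → Y`, where `X` is a regular space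
with a uniform base at non-isolated points and `Y` is first-countable, such that
`f` is not boundary-compact. -/
theorem example_3_7 :
    ∃ (X Y : Type) (_ : TopologicalSpace X) (_ : TopologicalSpace Y) (f : X → Y),
      T2Space X ∧ T2Space Y ∧ RegularSpace X ∧
      (∃ 𝒰 : Set (Set X), IsUniformBaseAtNonIsolatedPoints 𝒰) ∧
      FirstCountableTopology Y ∧
      Continuous f ∧ Function.Surjective f ∧ IsClosedMap f ∧
      ∃ y : Y, ¬ IsCompact (frontier (f ⁻¹' {y})) := by
  obtain ⟨𝒜, h𝒜inf, hAinf, had, hmad⟩ := Example37.exists_mad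
  refine ⟨Example37.X 𝒜, OnePoint ℕ, inferInstance, inferInstance, Example37.f,
    Example37.t2 had, inferInstance, Example37.regular had,
    ⟨Example37.𝒰 𝒜, Example37.uniform_base hAinf⟩, inferInstance,
    Example37.continuous_f, Example37.surjective_f h𝒜inf.nonempty,
    Example37.isClosedMap_f hmad, OnePoint.infty, ?_⟩
  rw [Example37.preimage_infty]
  rw [frontier, Example37.isClosed_D.closure_eq,
    Example37.interior_D hAinf, Set.diff_empty]
  exact Example37.not_compact_D h𝒜inf
end

section
/- There exist a regular Hausdorff space X having a uniform base at non-isolated points, a Hausdorff space Y, and a continuous closed surjection f : X → Y such that for every σ-closed-discrete subset Z ⊆ Y there exists y ∈ Y \ Z with f⁻¹(y) not compact; in other words, spaces with a uniform base at non-isolated points do not satisfy the decomposition theorem. (Such an example is X = (Y × S₁) \ (D × {0}) with the projection onto Y, where Y = ψ(D) is the Isbell–Mrówka space over an uncountable set D and S₁ = {0} ∪ {1/n : n ∈ ℕ} ⊆ ℝ.) -/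
open Set Topology Filter Function

noncomputable section Example38
open OnePoint

/-- A maximal almost disjoint family on `ℝ`, with enumerations of its members. -/
structure MadData where
  mem : Set (Set ℝ)
  ad : ∀ A ∈ mem, ∀ B ∈ mem, A ≠ B → (A ∩ B).Finite
  max' : ∀ E : Set ℝ, E.Infinite → ∃ A ∈ mem, (A ∩ E).Infinite
  enum : ↥mem → ℕ → ℝ
  enum_range : ∀ a : ↥mem, Set.range (enum a) = (a : Set ℝ)

lemma madData_exists : Nonempty MadData := by
  classical
  set S : Set (Set (Set ℝ)) :=
    {𝒞 | (∀ A ∈ 𝒞, A.Infinite ∧ A.Countable) ∧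
      ∀ A ∈ 𝒞, ∀ B ∈ 𝒞, A ≠ B → (A ∩ B).Finite} with hSdef
  have hzorn : ∀ c ⊆ S, IsChain (· ⊆ ·) c → ∃ ub ∈ S, ∀ s ∈ c, s ⊆ ub := by
    intro c hcS hchain
    refine ⟨⋃₀ c, ⟨?_, ?_⟩, fun s hs => subset_sUnion_of_mem hs⟩
    · rintro A ⟨𝒞, h𝒞c, hA⟩
      exact (hcS h𝒞c).1 A hA
    · rintro A ⟨𝒞, h𝒞c, hA⟩ B ⟨𝒟, h𝒟c, hB⟩ hne
      rcases hchain.total h𝒞c h𝒟c with h | h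
      · exact (hcS h𝒟c).2 A (h hA) B hB hne
      · exact (hcS h𝒞c).2 A hA B (h hB) hne
  obtain ⟨𝒜, h𝒜⟩ := zorn_subset S hzorn
  have h𝒜S : 𝒜 ∈ S := h𝒜.prop
  have hmax : ∀ E : Set ℝ, E.Infinite → ∃ A ∈ 𝒜, (A ∩ E).Infinite := by
    intro E hE
    by_contra hcon
    push_neg at hcon
    have hfin : ∀ A ∈ 𝒜, (A ∩ E).Finite := fun A hA => hcon A hA
    set e : ℕ ↪ ℝ := (Set.Infinite.natEmbedding E hE).trans (Function.Embedding.subtype _)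
      with hedef
    set E' : Set ℝ := Set.range e with hE'def
    have hE'E : E' ⊆ E := by
      rintro x ⟨n, rfl⟩
      exact ((Set.Infinite.natEmbedding E hE) n).2
    have hE'inf : E'.Infinite := Set.infinite_range_of_injective e.injective
    have hE'cnt : E'.Countable := Set.countable_range e
    have hS' : insert E' 𝒜 ∈ S := by
      refine ⟨?_, ?_⟩
      · rintro A (rfl | hA)
        · exact ⟨hE'inf, hE'cnt⟩
        · exact h𝒜S.1 A hA
      · rintro A (rfl | hA) B (rfl | hB) hne
        · exact absurd rfl hne
        · rw [Set.inter_comm]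
          exact (hfin B hB).subset (fun x hx => ⟨hx.1, hE'E hx.2⟩)
        · exact (hfin A hA).subset (fun x hx => ⟨hx.1, hE'E hx.2⟩)
        · exact h𝒜S.2 A hA B hB hne
    have hsub : insert E' 𝒜 ⊆ 𝒜 := h𝒜.2 hS' (Set.subset_insert _ _)
    have hE'mem : E' ∈ 𝒜 := hsub (Set.mem_insert _ _)
    have : (E' ∩ E).Finite := hfin E' hE'mem
    exact absurd (Set.inter_eq_left.mpr hE'E ▸ this) hE'inf
  have henum : ∀ a : ↥𝒜, ∃ f : ℕ → ℝ, (a : Set ℝ) = Set.range f := by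
    intro a
    exact (h𝒜S.1 a a.2).2.exists_eq_range (h𝒜S.1 a a.2).1.nonempty
  choose f hf using henum
  exact ⟨⟨𝒜, h𝒜S.2, hmax, f, fun a => (hf a).symm⟩⟩

variable (M : MadData)

/-- The Isbell–Mrówka space `ψ(D)` over `D = ℝ`. -/
abbrev YY : Type := ↥M.mem ⊕ ℝ

def yOpen (U : Set (YY M)) : Prop :=
  ∀ a : ↥M.mem, Sum.inl a ∈ U → {d : ℝ | d ∈ (a : Set ℝ) ∧ Sum.inr d ∉ U}.Finite

instance (priority := 2000) yTop : TopologicalSpace (YY M) where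
  IsOpen := yOpen M
  isOpen_univ := by
    intro a _
    convert Set.finite_empty
    ext d; simp
  isOpen_inter := by
    intro U V hU hV a ha
    refine ((hU a ha.1).union (hV a ha.2)).subset ?_
    rintro d ⟨hda, hd⟩
    by_cases hdu : Sum.inr d ∈ U
    · exact Or.inr ⟨hda, fun hv => hd ⟨hdu, hv⟩⟩
    · exact Or.inl ⟨hda, hdu⟩
  isOpen_sUnion := by
    intro S hS a ha
    obtain ⟨U, hUS, haU⟩ := ha
    refine (hS U hUS a haU).subset ?_
    rintro d ⟨hda, hd⟩
    exact ⟨hda, fun hU => hd ⟨U, hUS, hU⟩⟩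

lemma isOpen_iff_Y {U : Set (YY M)} : IsOpen U ↔ yOpen M U := Iff.rfl

def Vset (a : ↥M.mem) (F : Set ℝ) : Set (YY M) :=
  {y | y = Sum.inl a ∨ ∃ d ∈ (a : Set ℝ) \ F, y = Sum.inr d}

lemma inl_mem_Vset (a : ↥M.mem) (F : Set ℝ) : (Sum.inl a : YY M) ∈ Vset M a F := Or.inl rfl

lemma inr_mem_Vset {a : ↥M.mem} {F : Set ℝ} {d : ℝ} (h : d ∈ (a : Set ℝ) \ F) :
    (Sum.inr d : YY M) ∈ Vset M a F := Or.inr ⟨d, h, rfl⟩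

lemma Vset_anti {a : ↥M.mem} {F F' : Set ℝ} (h : F ⊆ F') : Vset M a F' ⊆ Vset M a F := by
  rintro y (rfl | ⟨d, ⟨hd1, hd2⟩, rfl⟩)
  · exact Or.inl rfl
  · exact Or.inr ⟨d, ⟨hd1, fun hc => hd2 (h hc)⟩, rfl⟩

lemma isOpen_Vset (a : ↥M.mem) {F : Set ℝ} (hF : F.Finite) : IsOpen (Vset M a F) := by
  rw [isOpen_iff_Y]
  intro b hb
  rcases hb with hb | ⟨d, _, hd⟩
  · obtain rfl : b = a := Sum.inl.inj hb
    refine hF.subset ?_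
    rintro d ⟨hda, hd⟩
    by_contra hdF
    exact hd (inr_mem_Vset M ⟨hda, hdF⟩)
  · exact absurd hd (by simp)

lemma isClosed_Vset (a : ↥M.mem) (F : Set ℝ) : IsClosed (Vset M a F) := by
  rw [← isOpen_compl_iff, isOpen_iff_Y]
  intro b hb
  have hba : b ≠ a := fun h => hb (h ▸ inl_mem_Vset M a F)
  refine (M.ad b b.2 a a.2 (fun h => hba (Subtype.ext h))).subset ?_
  rintro d ⟨hdb, hd⟩
  rw [mem_compl_iff, not_not] at hd
  rcases hd with h | ⟨e, he, heq⟩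
  · exact absurd h (by simp)
  · obtain rfl : d = e := by simpa using heq
    exact ⟨hdb, he.1⟩

lemma mem_nhds_inl {s : Set (YY M)} {a : ↥M.mem} :
    s ∈ 𝓝 (Sum.inl a : YY M) ↔
      Sum.inl a ∈ s ∧ {d : ℝ | d ∈ (a : Set ℝ) ∧ Sum.inr d ∉ s}.Finite := by
  constructor
  · intro hs
    obtain ⟨U, hUs, hU, haU⟩ := mem_nhds_iff.mp hs
    exact ⟨hUs haU, (((isOpen_iff_Y M).mp hU) a haU).subset
      (fun d hd => ⟨hd.1, fun h => hd.2 (hUs h)⟩)⟩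
  · rintro ⟨has, hfin⟩
    refine mem_nhds_iff.mpr ⟨Vset M a {d | d ∈ (a : Set ℝ) ∧ Sum.inr d ∉ s}, ?_,
      isOpen_Vset M a hfin, inl_mem_Vset M _ _⟩
    rintro y (rfl | ⟨d, ⟨hd1, hd2⟩, rfl⟩)
    · exact has
    · by_contra h
      exact hd2 ⟨hd1, h⟩

lemma isOpen_singleton_inr (d : ℝ) : IsOpen ({Sum.inr d} : Set (YY M)) := by
  rw [isOpen_iff_Y]
  intro a ha
  simp at ha

instance : T2Space (YY M) := by
  refine ⟨fun x y hxy => ?_⟩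
  rcases x with a | d <;> rcases y with b | e
  · have hab : a ≠ b := fun h => hxy (by rw [h])
    refine ⟨Vset M a ((a : Set ℝ) ∩ b), Vset M b ((a : Set ℝ) ∩ b),
      isOpen_Vset M a (M.ad a a.2 b b.2 (fun h => hab (Subtype.ext h))),
      isOpen_Vset M b (M.ad a a.2 b b.2 (fun h => hab (Subtype.ext h))),
      inl_mem_Vset M _ _, inl_mem_Vset M _ _, ?_⟩
    rw [Set.disjoint_left]
    rintro z (rfl | ⟨d, hd, rfl⟩)
    · rintro (h | ⟨e, he, heq⟩)
      · exact hab (Sum.inl.inj h)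
      · exact absurd heq (by simp)
    · rintro (h | ⟨e, he, heq⟩)
      · exact absurd h (by simp)
      · obtain rfl : d = e := by simpa using heq
        exact he.2 ⟨hd.1, he.1⟩
  · refine ⟨Vset M a {e}, {Sum.inr e}, isOpen_Vset M a (Set.finite_singleton e),
      isOpen_singleton_inr M e, inl_mem_Vset M _ _, rfl, ?_⟩
    rw [Set.disjoint_left]
    rintro z (rfl | ⟨d, hd, rfl⟩)
    · simp
    · simp only [Set.mem_singleton_iff]
      intro h
      exact hd.2 (by simpa using h)
  · refine ⟨{Sum.inr d}, Vset M b {d}, isOpen_singleton_inr M d,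
      isOpen_Vset M b (Set.finite_singleton d), rfl, inl_mem_Vset M _ _, ?_⟩
    rw [Set.disjoint_left]
    rintro z rfl
    rintro (h | ⟨e, he, heq⟩)
    · exact absurd h (by simp)
    · obtain rfl : d = e := by simpa using heq
      exact he.2 rfl
  · have hde : d ≠ e := fun h => hxy (by rw [h])
    refine ⟨{Sum.inr d}, {Sum.inr e}, isOpen_singleton_inr M d, isOpen_singleton_inr M e,
      rfl, rfl, ?_⟩
    rw [Set.disjoint_left]
    rintro z rfl h
    exact hde (by simpa using h)

instance : RegularSpace (YY M) := by
  apply RegularSpace.of_exists_mem_nhds_isClosed_subset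
  intro x s hs
  rcases x with a | d
  · obtain ⟨has, hfin⟩ := (mem_nhds_inl M).mp hs
    refine ⟨Vset M a {d | d ∈ (a : Set ℝ) ∧ Sum.inr d ∉ s},
      (isOpen_Vset M a hfin).mem_nhds (inl_mem_Vset M _ _), isClosed_Vset M a _, ?_⟩
    rintro y (rfl | ⟨e, ⟨he1, he2⟩, rfl⟩)
    · exact has
    · by_contra h
      exact he2 ⟨he1, h⟩
  · refine ⟨{Sum.inr d}, (isOpen_singleton_inr M d).mem_nhds rfl, ?_,
      Set.singleton_subset_iff.mpr (mem_of_mem_nhds hs)⟩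
    rw [← isOpen_compl_iff, isOpen_iff_Y]
    intro a _
    refine (Set.finite_singleton d).subset ?_
    rintro e ⟨hea, he⟩
    rw [mem_compl_iff, not_not, mem_singleton_iff] at he
    simpa using Sum.inr.inj he

/-- The space `X = (Y × S₁) \ (D × {0})`, with `S₁` realized as `OnePoint ℕ`. -/
abbrev XX : Type :=
  {p : YY M × OnePoint ℕ // p.2 = ∞ → ∃ a : ↥M.mem, p.1 = Sum.inl a}

def fX : XX M → YY M := fun x => x.val.1

def xinl (a : ↥M.mem) (s : OnePoint ℕ) : XX M := ⟨(Sum.inl a, s), fun _ => ⟨a, rfl⟩⟩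

def xinr (d : ℝ) (n : ℕ) : XX M :=
  ⟨(Sum.inr d, (n : OnePoint ℕ)), fun h => absurd h (OnePoint.coe_ne_infty n)⟩

lemma onePoint_cases (s : OnePoint ℕ) : s = ∞ ∨ ∃ n : ℕ, s = (n : OnePoint ℕ) := by
  induction s using OnePoint.rec with
  | infty => exact Or.inl rfl
  | coe n => exact Or.inr ⟨n, rfl⟩

def Fk (a : ↥M.mem) (k : ℕ) : Set ℝ := M.enum a '' (Set.Iic k)

lemma Fk_finite (a : ↥M.mem) (k : ℕ) : (Fk M a k).Finite := (Set.finite_Iic k).image _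

lemma Fk_mono (a : ↥M.mem) {k k' : ℕ} (h : k ≤ k') : Fk M a k ⊆ Fk M a k' :=
  Set.image_mono (Set.Iic_subset_Iic.mpr h)

lemma exists_Fk {a : ↥M.mem} {G : Set ℝ} (hG : G.Finite) (hGa : G ⊆ (a : Set ℝ)) :
    ∃ k, G ⊆ Fk M a k := by
  classical
  have hex : ∀ x ∈ G, ∃ n, M.enum a n = x := by
    intro x hx
    have : x ∈ Set.range (M.enum a) := by rw [M.enum_range]; exact hGa hx
    exact this
  choose! φ hφ using hex
  refine ⟨hG.toFinset.sup φ, fun x hx => ?_⟩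
  exact ⟨φ x, Finset.le_sup (f := φ) (by simpa using hx), hφ x hx⟩

def sliceU (a : ↥M.mem) (k m : ℕ) : Set (XX M) :=
  {x | x.val.1 ∈ Vset M a (Fk M a k) ∧ x.val.2 = (m : OnePoint ℕ)}

def tubeU (a : ↥M.mem) (k : ℕ) : Set (XX M) :=
  {x | x.val.1 ∈ Vset M a (Fk M a k) ∧ ∀ m : ℕ, m < k → x.val.2 ≠ (m : OnePoint ℕ)}

def pointU (d : ℝ) (n : ℕ) : Set (XX M) := {x | x.val = (Sum.inr d, (n : OnePoint ℕ))}

lemma isOpen_coe_singleton (n : ℕ) : IsOpen ({(n : OnePoint ℕ)} : Set (OnePoint ℕ)) := by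
  have h : ({(n : OnePoint ℕ)} : Set (OnePoint ℕ)) = (fun x : ℕ => (x : OnePoint ℕ)) '' {n} := by
    simp
  rw [h]
  exact OnePoint.isOpen_image_coe.mpr (isOpen_discrete _)

lemma isOpen_tail (k : ℕ) :
    IsOpen {s : OnePoint ℕ | ∀ m : ℕ, m < k → s ≠ (m : OnePoint ℕ)} := by
  rw [OnePoint.isOpen_iff_of_mem (by intro m hm; exact OnePoint.infty_ne_coe m)]
  have hsub : (((↑) : ℕ → OnePoint ℕ) ⁻¹' {s | ∀ m : ℕ, m < k → s ≠ (m : OnePoint ℕ)})ᶜ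
      ⊆ Set.Iio k := by
    intro n hn
    simp only [Set.mem_compl_iff, Set.mem_preimage, Set.mem_setOf_eq] at hn
    push_neg at hn
    obtain ⟨m, hm, hnm⟩ := hn
    rwa [show n = m from OnePoint.coe_eq_coe.mp hnm]
  exact ⟨isClosed_discrete _, ((Set.finite_Iio k).subset hsub).isCompact⟩

lemma isOpen_sliceU (a : ↥M.mem) (k m : ℕ) : IsOpen (sliceU M a k m) := by
  have h : sliceU M a k m
      = Subtype.val ⁻¹' ((Vset M a (Fk M a k)) ×ˢ ({(m : OnePoint ℕ)} : Set (OnePoint ℕ))) := by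
    ext x
    exact Iff.rfl
  rw [h]
  exact ((isOpen_Vset M a (Fk_finite M a k)).prod (isOpen_coe_singleton m)).preimage
    continuous_subtype_val

lemma isOpen_tubeU (a : ↥M.mem) (k : ℕ) : IsOpen (tubeU M a k) := by
  have h : tubeU M a k
      = Subtype.val ⁻¹' ((Vset M a (Fk M a k)) ×ˢ
        {s : OnePoint ℕ | ∀ m : ℕ, m < k → s ≠ (m : OnePoint ℕ)}) := by
    ext x
    simp [tubeU, Set.mem_prod]
  rw [h]
  exact ((isOpen_Vset M a (Fk_finite M a k)).prod (isOpen_tail k)).preimage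
    continuous_subtype_val

lemma isOpen_pointU (d : ℝ) (n : ℕ) : IsOpen (pointU M d n) := by
  have h : pointU M d n
      = Subtype.val ⁻¹' (({Sum.inr d} : Set (YY M)) ×ˢ ({(n : OnePoint ℕ)} : Set (OnePoint ℕ))) := by
    ext x
    simp [pointU, Set.mem_prod, Prod.ext_iff]
  rw [h]
  exact ((isOpen_singleton_inr M d).prod (isOpen_coe_singleton n)).preimage
    continuous_subtype_val

lemma sliceU_mono (a : ↥M.mem) {k k' : ℕ} (h : k ≤ k') (m : ℕ) :
    sliceU M a k' m ⊆ sliceU M a k m :=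
  fun x hx => ⟨Vset_anti M (Fk_mono M a h) hx.1, hx.2⟩

lemma tubeU_mono (a : ↥M.mem) {k k' : ℕ} (h : k ≤ k') : tubeU M a k' ⊆ tubeU M a k :=
  fun x hx => ⟨Vset_anti M (Fk_mono M a h) hx.1, fun m hm => hx.2 m (lt_of_lt_of_le hm h)⟩

lemma exists_sliceU_subset {U : Set (XX M)} (hU : IsOpen U) {a : ↥M.mem} {m : ℕ}
    (hx : xinl M a (m : OnePoint ℕ) ∈ U) : ∃ k, sliceU M a k m ⊆ U := by
  obtain ⟨W, hW, rfl⟩ := isOpen_induced_iff.mp hU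
  obtain ⟨u, v, hu, hv, hau, hmv, huv⟩ :=
    (isOpen_prod_iff.mp hW) (Sum.inl a) ((m : OnePoint ℕ)) hx
  obtain ⟨k, hk⟩ := exists_Fk M (G := {d | d ∈ (a : Set ℝ) ∧ Sum.inr d ∉ u})
    (((isOpen_iff_Y M).mp hu) a hau) (fun d hd => hd.1)
  refine ⟨k, fun x hx' => ?_⟩
  have h1 : x.val.1 ∈ u := by
    rcases hx'.1 with h | ⟨d, hd, h⟩
    · rw [h]; exact hau
    · rw [h]
      by_contra hcon
      exact hd.2 (hk ⟨hd.1, hcon⟩)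
  have h2 : x.val.2 ∈ v := by rw [hx'.2]; exact hmv
  exact huv ⟨h1, h2⟩

lemma exists_tubeU_subset {U : Set (XX M)} (hU : IsOpen U) {a : ↥M.mem}
    (hx : xinl M a ∞ ∈ U) : ∃ k, tubeU M a k ⊆ U := by
  obtain ⟨W, hW, rfl⟩ := isOpen_induced_iff.mp hU
  obtain ⟨u, v, hu, hv, hau, hmv, huv⟩ := (isOpen_prod_iff.mp hW) (Sum.inl a) ∞ hx
  obtain ⟨k₁, hk₁⟩ := exists_Fk M (G := {d | d ∈ (a : Set ℝ) ∧ Sum.inr d ∉ u})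
    (((isOpen_iff_Y M).mp hu) a hau) (fun d hd => hd.1)
  have hvfin : {n : ℕ | (n : OnePoint ℕ) ∉ v}.Finite := by
    have hc : IsCompact ((((↑) : ℕ → OnePoint ℕ)) ⁻¹' v)ᶜ :=
      ((OnePoint.isOpen_iff_of_mem hmv).mp hv).2
    rwa [isCompact_iff_finite] at hc
  obtain ⟨k₂, hk₂⟩ := hvfin.bddAbove
  refine ⟨max k₁ (k₂ + 1), fun x hx' => ?_⟩
  have h1 : x.val.1 ∈ u := by
    rcases hx'.1 with h | ⟨d, hd, h⟩
    · rw [h]; exact hau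
    · rw [h]
      by_contra hcon
      exact hd.2 (Fk_mono M a (le_max_left _ _) (hk₁ ⟨hd.1, hcon⟩))
  have h2 : x.val.2 ∈ v := by
    rcases onePoint_cases x.val.2 with h | ⟨n, h⟩
    · rw [h]; exact hmv
    · rw [h]
      by_contra hcon
      have hn : n ≤ k₂ := hk₂ hcon
      exact hx'.2 n (lt_of_le_of_lt hn (lt_of_lt_of_le (Nat.lt_succ_self _) (le_max_right _ _))) h
  exact huv ⟨h1, h2⟩

def baseU : Set (Set (XX M)) :=
  {P | (∃ d n, P = pointU M d n) ∨ (∃ a k m, P = sliceU M a k m) ∨ (∃ a k, P = tubeU M a k)}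

lemma baseU_isBasis : TopologicalSpace.IsTopologicalBasis (baseU M) := by
  refine TopologicalSpace.isTopologicalBasis_of_isOpen_of_nhds ?_ ?_
  · rintro u (⟨d, n, rfl⟩ | ⟨a, k, m, rfl⟩ | ⟨a, k, rfl⟩)
    exacts [isOpen_pointU M d n, isOpen_sliceU M a k m, isOpen_tubeU M a k]
  · intro x u hxu hu
    rcases hx1 : x.val.1 with a | d
    · rcases onePoint_cases x.val.2 with h2 | ⟨m, h2⟩
      · have hxe : x = xinl M a ∞ := Subtype.ext (Prod.ext hx1 h2)
        obtain ⟨k, hk⟩ := exists_tubeU_subset M hu (hxe ▸ hxu)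
        refine ⟨tubeU M a k, Or.inr (Or.inr ⟨a, k, rfl⟩), ?_, hk⟩
        exact ⟨by rw [hx1]; exact inl_mem_Vset M _ _,
          fun m hm => by rw [h2]; exact OnePoint.infty_ne_coe m⟩
      · have hxe : x = xinl M a (m : OnePoint ℕ) := Subtype.ext (Prod.ext hx1 h2)
        obtain ⟨k, hk⟩ := exists_sliceU_subset M hu (hxe ▸ hxu)
        refine ⟨sliceU M a k m, Or.inr (Or.inl ⟨a, k, m, rfl⟩), ?_, hk⟩
        exact ⟨by rw [hx1]; exact inl_mem_Vset M _ _, h2⟩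
    · rcases onePoint_cases x.val.2 with h2 | ⟨n, h2⟩
      · obtain ⟨b, hb⟩ := x.prop h2
        rw [hx1] at hb
        exact absurd hb (by simp)
      · refine ⟨pointU M d n, Or.inl ⟨d, n, rfl⟩, Prod.ext hx1 h2, ?_⟩
        intro y hy
        have hyx : y = x := Subtype.ext (hy.trans (Prod.ext hx1 h2).symm)
        rwa [hyx]

lemma isolated_inr {x : XX M} {d : ℝ} {n : ℕ}
    (h : x.val = (Sum.inr d, (n : OnePoint ℕ))) : IsOpen ({x} : Set (XX M)) := by
  have he : ({x} : Set (XX M)) = pointU M d n := by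
    ext y
    constructor
    · rintro rfl; exact h
    · intro hy; exact Subtype.ext (hy.trans h.symm)
  rw [he]
  exact isOpen_pointU M d n

lemma uniform_base : IsUniformBaseAtNonIsolatedPoints (baseU M) := by
  refine ⟨baseU_isBasis M, ?_⟩
  intro x hx 𝒰' h𝒰'sub hcnt hinf U hxU hU
  rcases hx1 : x.val.1 with a | d
  swap
  · exfalso
    rcases onePoint_cases x.val.2 with h2 | ⟨n, h2⟩
    · obtain ⟨b, hb⟩ := x.prop h2
      rw [hx1] at hb
      exact absurd hb (by simp)
    · exact hx (isolated_inr M (Prod.ext hx1 h2))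
  rcases onePoint_cases x.val.2 with h2 | ⟨m, h2⟩
  · -- x = (inl a, ∞); the only members of the base containing x are the tubes at a
    have hxe : x = xinl M a ∞ := Subtype.ext (Prod.ext hx1 h2)
    obtain ⟨k₀, hk₀⟩ := exists_tubeU_subset M hU (hxe ▸ hxU)
    have hbad : ((fun k => tubeU M a k) '' (Set.Iio k₀)).Finite := (Set.finite_Iio k₀).image _
    obtain ⟨P, hP𝒰', hPbad⟩ := (hinf.diff hbad).nonempty
    obtain ⟨hPbase, hxP⟩ := h𝒰'sub hP𝒰'
    rcases hPbase with ⟨d, n, rfl⟩ | ⟨a', k, m', rfl⟩ | ⟨a', k, rfl⟩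
    · exact absurd (hx1.symm.trans (congrArg Prod.fst hxP)) (by simp)
    · exact absurd (h2.symm.trans hxP.2) (by simp)
    · rcases hxP.1 with he | ⟨d, hd, he⟩
      · rw [(Sum.inl.inj (he.symm.trans hx1) : a' = a)] at hP𝒰' hPbad
        have hk : ¬ k < k₀ := fun hlt => hPbad ⟨k, hlt, rfl⟩
        exact ⟨tubeU M a k, hP𝒰', (tubeU_mono M a (le_of_not_gt hk)).trans hk₀⟩
      · exact absurd (hx1.symm.trans he) (by simp)
  · -- x = (inl a, m)
    have hxe : x = xinl M a (m : OnePoint ℕ) := Subtype.ext (Prod.ext hx1 h2)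
    obtain ⟨k₀, hk₀⟩ := exists_sliceU_subset M hU (hxe ▸ hxU)
    have hbad : (((fun k => sliceU M a k m) '' (Set.Iio k₀))
        ∪ ((fun k => tubeU M a k) '' (Set.Iic m))).Finite :=
      ((Set.finite_Iio k₀).image _).union ((Set.finite_Iic m).image _)
    obtain ⟨P, hP𝒰', hPbad⟩ := (hinf.diff hbad).nonempty
    obtain ⟨hPbase, hxP⟩ := h𝒰'sub hP𝒰'
    rcases hPbase with ⟨d, n, rfl⟩ | ⟨a', k, m', rfl⟩ | ⟨a', k, rfl⟩
    · exact absurd (hx1.symm.trans (congrArg Prod.fst hxP)) (by simp)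
    · have hm' : m' = m := (OnePoint.coe_eq_coe.mp (h2.symm.trans hxP.2)).symm
      rw [hm'] at hP𝒰' hPbad
      rcases hxP.1 with he | ⟨d, hd, he⟩
      · rw [(Sum.inl.inj (he.symm.trans hx1) : a' = a)] at hP𝒰' hPbad
        have hk : ¬ k < k₀ := fun hlt => hPbad (Or.inl ⟨k, hlt, rfl⟩)
        exact ⟨sliceU M a k m, hP𝒰', (sliceU_mono M a (le_of_not_gt hk) m).trans hk₀⟩
      · exact absurd (hx1.symm.trans he) (by simp)
    · rcases hxP.1 with he | ⟨d, hd, he⟩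
      · rw [(Sum.inl.inj (he.symm.trans hx1) : a' = a)] at hPbad
        have hkm : k ≤ m := by
          by_contra hgt
          exact (hxP.2 m (lt_of_not_ge hgt)) h2
        exact absurd (Or.inr ⟨k, hkm, rfl⟩) hPbad
      · exact absurd (hx1.symm.trans he) (by simp)

lemma continuous_fX : Continuous (fX M) := continuous_fst.comp continuous_subtype_val

lemma surjective_fX : Function.Surjective (fX M) := by
  rintro (a | d)
  · exact ⟨xinl M a ∞, rfl⟩
  · exact ⟨xinr M d 0, rfl⟩

lemma isClosedMap_fX : IsClosedMap (fX M) := by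
  intro F hF
  rw [← isOpen_compl_iff, isOpen_iff_Y]
  intro a ha
  have hset : {d : ℝ | d ∈ (a : Set ℝ) ∧ Sum.inr d ∉ (fX M '' F)ᶜ}
      = {d : ℝ | d ∈ (a : Set ℝ) ∧ Sum.inr d ∈ fX M '' F} := by
    ext d
    simp only [Set.mem_setOf_eq, mem_compl_iff, not_not]
  rw [hset]
  by_contra hTfin
  have hT : {d : ℝ | d ∈ (a : Set ℝ) ∧ Sum.inr d ∈ fX M '' F}.Infinite := hTfin
  set T := {d : ℝ | d ∈ (a : Set ℝ) ∧ Sum.inr d ∈ fX M '' F} with hTdef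
  have hwit : ∀ d ∈ T, ∃ n : ℕ, ∃ x ∈ F, x.val = (Sum.inr d, (n : OnePoint ℕ)) := by
    rintro d ⟨hda, x, hxF, hxd⟩
    rcases onePoint_cases x.val.2 with h2 | ⟨n, h2⟩
    · obtain ⟨b, hb⟩ := x.prop h2
      have : fX M x = x.val.1 := rfl
      rw [this, hb] at hxd
      exact absurd hxd (by simp)
    · exact ⟨n, x, hxF, Prod.ext hxd h2⟩
  classical
  choose! nf hnf using hwit
  by_cases hcase : ∃ m : ℕ, {d | d ∈ T ∧ nf d = m}.Infinite
  · obtain ⟨m, hm⟩ := hcase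
    have hx₀ : xinl M a (m : OnePoint ℕ) ∈ F := by
      rw [← hF.closure_eq, mem_closure_iff]
      intro o ho hxo
      obtain ⟨k, hk⟩ := exists_sliceU_subset M ho hxo
      obtain ⟨d, hdTm, hdF⟩ := (hm.diff (Fk_finite M a k)).nonempty
      obtain ⟨x, hxF, hxval⟩ := hnf d hdTm.1
      refine ⟨x, hk ⟨?_, ?_⟩, hxF⟩
      · rw [congrArg Prod.fst hxval]
        exact inr_mem_Vset M ⟨hdTm.1.1, hdF⟩
      · rw [congrArg Prod.snd hxval, hdTm.2]
    exact ha ⟨xinl M a (m : OnePoint ℕ), hx₀, rfl⟩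
  · push_neg at hcase
    have hx₀ : xinl M a ∞ ∈ F := by
      rw [← hF.closure_eq, mem_closure_iff]
      intro o ho hxo
      obtain ⟨k, hk⟩ := exists_tubeU_subset M ho hxo
      have hbadfin : ((Fk M a k) ∪ ⋃ m ∈ Set.Iio k, {d | d ∈ T ∧ nf d = m}).Finite :=
        (Fk_finite M a k).union ((Set.finite_Iio k).biUnion
          (fun m _ => hcase m))
      obtain ⟨d, hdT, hdbad⟩ := (hT.diff hbadfin).nonempty
      obtain ⟨x, hxF, hxval⟩ := hnf d hdT
      have hnfk : k ≤ nf d := by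
        by_contra hlt
        exact hdbad (Or.inr (Set.mem_biUnion (Set.mem_Iio.mpr (lt_of_not_ge hlt)) ⟨hdT, rfl⟩))
      refine ⟨x, hk ⟨?_, ?_⟩, hxF⟩
      · rw [congrArg Prod.fst hxval]
        exact inr_mem_Vset M ⟨hdT.1, fun hc => hdbad (Or.inl hc)⟩
      · intro j hj
        rw [congrArg Prod.snd hxval]
        intro hc
        have hj' : nf d = j := OnePoint.coe_eq_coe.mp hc
        omega
    exact ha ⟨xinl M a ∞, hx₀, rfl⟩

lemma fiber_not_compact (d : ℝ) : ¬ IsCompact (fX M ⁻¹' {Sum.inr d}) := by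
  intro hc
  have hopen : ∀ n : ℕ, IsOpen {x : XX M | x.val.2 = (n : OnePoint ℕ)} := by
    intro n
    have h : {x : XX M | x.val.2 = (n : OnePoint ℕ)}
        = Subtype.val ⁻¹' ((Set.univ : Set (YY M)) ×ˢ ({(n : OnePoint ℕ)} : Set (OnePoint ℕ))) := by
      ext x
      simp only [Set.mem_setOf_eq, Set.mem_preimage, Set.mem_prod, Set.mem_univ, true_and,
        Set.mem_singleton_iff]
    rw [h]
    exact (isOpen_univ.prod (isOpen_coe_singleton n)).preimage continuous_subtype_val
  have hcov : fX M ⁻¹' {Sum.inr d} ⊆ ⋃ n : ℕ, {x : XX M | x.val.2 = (n : OnePoint ℕ)} := by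
    intro x hx
    rcases onePoint_cases x.val.2 with h2 | ⟨n, h2⟩
    · obtain ⟨b, hb⟩ := x.prop h2
      have hx' : x.val.1 = Sum.inr d := hx
      rw [hx'] at hb
      exact absurd hb (by simp)
    · exact Set.mem_iUnion.mpr ⟨n, h2⟩
  obtain ⟨t, ht⟩ := hc.elim_finite_subcover _ hopen hcov
  have hx : xinr M d (t.sup id + 1) ∈ fX M ⁻¹' {Sum.inr d} := rfl
  obtain ⟨n, hnt, hmem⟩ := Set.mem_iUnion₂.mp (ht hx)
  have h1 : t.sup id + 1 = n := OnePoint.coe_eq_coe.mp hmem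
  have h2 : n ≤ t.sup id := Finset.le_sup (f := id) hnt
  omega

lemma Tn_finite {Zn : Set (YY M)} (hcl : IsClosed Zn)
    (hdisc : ∀ y ∈ Zn, ∃ U : Set (YY M), IsOpen U ∧ y ∈ U ∧ U ∩ Zn = {y}) :
    {d : ℝ | Sum.inr d ∈ Zn}.Finite := by
  by_contra hinf
  have hinf' : Set.Infinite {d : ℝ | Sum.inr d ∈ Zn} := hinf
  obtain ⟨A, hA𝒜, hAinf⟩ := M.max' _ hinf'
  set a : ↥M.mem := ⟨A, hA𝒜⟩ with hadef
  have hmem : Sum.inl a ∈ Zn := by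
    rw [← hcl.closure_eq, mem_closure_iff]
    intro o ho hao
    have hfin := (isOpen_iff_Y M).mp ho a hao
    obtain ⟨e, he1, he2⟩ := (hAinf.diff hfin).nonempty
    have heo : Sum.inr e ∈ o := by
      by_contra hcon
      exact he2 ⟨he1.1, hcon⟩
    exact ⟨Sum.inr e, heo, he1.2⟩
  obtain ⟨U, hUo, haU, hUZ⟩ := hdisc _ hmem
  have hfin := (isOpen_iff_Y M).mp hUo a haU
  obtain ⟨e, he1, he2⟩ := (hAinf.diff hfin).nonempty
  have heU : Sum.inr e ∈ U := by
    by_contra hcon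
    exact he2 ⟨he1.1, hcon⟩
  have : Sum.inr e ∈ U ∩ Zn := ⟨heU, he1.2⟩
  rw [hUZ] at this
  exact absurd this (by simp)


/-- Example 3.8: There are a regular space `X` with a uniform base at non-isolated
points and a closed map `f : X → Y` which does not satisfy the decomposition
theorem: for every σ-closed-discrete `Z ⊆ Y` some fiber over `Y \ Z` is
non-compact. -/
theorem example_3_8 :
    ∃ (X Y : Type) (_ : TopologicalSpace X) (_ : TopologicalSpace Y) (f : X → Y),
      T2Space X ∧ T2Space Y ∧ RegularSpace X ∧
      (∃ 𝒰 : Set (Set X), IsUniformBaseAtNonIsolatedPoints 𝒰) ∧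
      Continuous f ∧ Function.Surjective f ∧ IsClosedMap f ∧
      ∀ Z : Set Y,
        (∃ Zs : ℕ → Set Y, Z = (⋃ n, Zs n) ∧
          ∀ n, IsClosed (Zs n) ∧
            ∀ y ∈ Zs n, ∃ U : Set Y, IsOpen U ∧ y ∈ U ∧ U ∩ Zs n = {y}) →
        ∃ y ∉ Z, ¬ IsCompact (f ⁻¹' {y}) := by
  obtain ⟨M⟩ := madData_exists
  refine ⟨XX M, YY M, inferInstance, inferInstance, fX M, inferInstance, inferInstance,
    inferInstance, ⟨baseU M, uniform_base M⟩, continuous_fX M, surjective_fX M,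
    isClosedMap_fX M, ?_⟩
  rintro Z ⟨Zs, rfl, hZs⟩
  have hTfin : ∀ n, {d : ℝ | Sum.inr d ∈ Zs n}.Finite :=
    fun n => Tn_finite M (hZs n).1 (hZs n).2
  have hTcnt : {d : ℝ | ∃ n, Sum.inr d ∈ Zs n}.Countable := by
    have h : {d : ℝ | ∃ n, Sum.inr d ∈ Zs n} = ⋃ n, {d : ℝ | Sum.inr d ∈ Zs n} := by
      ext d; simp
    rw [h]
    exact Set.countable_iUnion (fun n => (hTfin n).countable)
  obtain ⟨d, hd⟩ : ∃ d : ℝ, d ∉ {d : ℝ | ∃ n, Sum.inr d ∈ Zs n} := by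
    by_contra hcon
    push_neg at hcon
    exact Cardinal.not_countable_real (hTcnt.mono (fun x _ => hcon x))
  refine ⟨Sum.inr d, ?_, fiber_not_compact M d⟩
  intro hdZ
  obtain ⟨n, hn⟩ := Set.mem_iUnion.mp hdZ
  exact hd ⟨n, hn⟩


end Example38
end
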